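/- arXiv:1706.01168 — 10 statements merged into one kernel-verified Lean document; each statement's English description precedes it below -/
import Mathlib

section
/- Let $(\Omega,\mathcal A)$ be a measurable space, $Q_1,\dots,Q_n$ probability measures on it, $F_1,\dots,F_n$ Borel probability measures on $\mathbb{R}$, and $X:\Omega\to\mathbb{R}$ measurable. Then $X$ has distribution $F_i$ under $Q_i$ for every $i=1,\dots,n$ if and only if for every probability measure $Q$ on $(\Omega,\mathcal A)$ dominating each $Q_i$, the pushforward $F=Q\circ X^{-1}$ dominates each $F_i$ and $(\frac{dF_1}{dF},\dots,\frac{dF_n}{dF})(X) = \mathbb{E}^Q[(\frac{dQ_1}{dQ},\dots,\frac{dQ_n}{dQ})\mid X]$ holds $Q$-almost surely. -/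
open MeasureTheory
open scoped ENNReal

section Aux

variable {α : Type*} [MeasurableSpace α] {μ : Measure α} {n : ℕ}

/-- A `Fin n → ℝ`-valued function is integrable if its components are. -/
lemma integrable_pi_of_components {f : α → Fin n → ℝ}
    (hmeas : AEStronglyMeasurable f μ)
    (hf : ∀ i, Integrable (fun x => f x i) μ) : Integrable f μ := by
  refine Integrable.mono' (g := fun x => ∑ i, ‖f x i‖)
    (integrable_finset_sum _ fun i _ => (hf i).norm) hmeas ?_
  filter_upwards with x
  refine (pi_norm_le_iff_of_nonneg (by positivity)).2 fun i => ?_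
  exact Finset.single_le_sum (fun j _ => norm_nonneg _) (Finset.mem_univ i)

/-- Components of the integral of a `Fin n → ℝ`-valued function. -/
lemma integral_pi_eval {f : α → Fin n → ℝ} (hf : Integrable f μ) (i : Fin n) :
    (∫ x, f x ∂μ) i = ∫ x, f x i ∂μ :=
  ((ContinuousLinearMap.proj (R := ℝ) (φ := fun _ : Fin n => ℝ) i).integral_comp_comm hf).symm

end Aux

/-- Theorem 2.2, equivalence (i) ⇔ (ii).
`X` has distribution `F i` under `Q i` for every `i` iff for every probability measure `Q'`
dominating each `Q i`, the pushforward `F = Q' ∘ X⁻¹` dominates each `F i` and the vector of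
Radon–Nikodym derivatives `(dFᵢ/dF)(X)` coincides `Q'`-a.s. with the conditional expectation
of `(dQᵢ/dQ')` given `σ(X)`. -/
theorem compatibility_characterization
    {Ω : Type} [MeasurableSpace Ω] (n : ℕ)
    (Q : Fin n → Measure Ω) (F : Fin n → Measure ℝ)
    [∀ i, IsProbabilityMeasure (Q i)] [∀ i, IsProbabilityMeasure (F i)]
    (X : Ω → ℝ) (hX : Measurable X) :
    (∀ i, (Q i).map X = F i) ↔
      (∀ Q' : Measure Ω, IsProbabilityMeasure Q' → (∀ i, Q i ≪ Q') →
        (∀ i, F i ≪ Q'.map X) ∧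
        (fun ω => fun i => ((F i).rnDeriv (Q'.map X) (X ω)).toReal)
          =ᵐ[Q']
        Q'[fun ω => fun i => ((Q i).rnDeriv Q' ω).toReal
            | MeasurableSpace.comap X inferInstance]) := by
  have hm : MeasurableSpace.comap X inferInstance ≤ (inferInstance : MeasurableSpace Ω) :=
    hX.comap_le
  -- measurability facts, uniform in `Q'`
  have hrnmeas : ∀ (Q' : Measure Ω),
      AEStronglyMeasurable (fun ω => fun i => ((Q i).rnDeriv Q' ω).toReal) Q' :=
    fun Q' => (measurable_pi_lambda _ fun i =>
      (Measure.measurable_rnDeriv (Q i) Q').ennreal_toReal).aestronglyMeasurable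
  have hrnmeas' : ∀ (i : Fin n) (Q' : Measure Ω),
      AEStronglyMeasurable (fun y => ((F i).rnDeriv (Q'.map X) y).toReal) (Q'.map X) :=
    fun i Q' => (Measure.measurable_rnDeriv _ _).ennreal_toReal.aestronglyMeasurable
  constructor
  · intro hmap Q' hQ'prob hac
    haveI := hQ'prob
    haveI : IsProbabilityMeasure (Q'.map X) := Measure.isProbabilityMeasure_map hX.aemeasurable
    have hacF : ∀ i, F i ≪ Q'.map X := fun i => (hmap i) ▸ (hac i).map hX
    refine ⟨hacF, ?_⟩
    have hf_int : Integrable (fun ω => fun i => ((Q i).rnDeriv Q' ω).toReal) Q' :=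
      integrable_pi_of_components (hrnmeas Q')
        (fun i => Measure.integrable_toReal_rnDeriv)
    have hg_int : Integrable (fun ω => fun i => ((F i).rnDeriv (Q'.map X) (X ω)).toReal) Q' := by
      refine integrable_pi_of_components ?_ (fun i => ?_)
      · exact (measurable_pi_lambda _ fun i =>
          ((Measure.measurable_rnDeriv _ _).ennreal_toReal).comp hX).aestronglyMeasurable
      · exact (integrable_map_measure (hrnmeas' i Q') hX.aemeasurable).1
          Measure.integrable_toReal_rnDeriv
    refine ae_eq_condExp_of_forall_setIntegral_eq hm hf_int
      (fun s _ _ => hg_int.integrableOn) ?_ ?_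
    · rintro s ⟨A, hA, rfl⟩ -
      funext i
      rw [integral_pi_eval hg_int.integrableOn i, integral_pi_eval hf_int.integrableOn i]
      have h1 : ∫ ω in X ⁻¹' A, ((F i).rnDeriv (Q'.map X) (X ω)).toReal ∂Q'
          = (F i A).toReal := by
        rw [← setIntegral_map hA (hrnmeas' i Q') hX.aemeasurable,
          Measure.setIntegral_toReal_rnDeriv (hacF i), measureReal_def]
      have h2 : ∫ ω in X ⁻¹' A, ((Q i).rnDeriv Q' ω).toReal ∂Q'
          = (Q i (X ⁻¹' A)).toReal := Measure.setIntegral_toReal_rnDeriv (hac i) _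
      rw [h1, h2, ← Measure.map_apply hX hA, hmap i]
    · have hmg : Measurable[MeasurableSpace.comap X inferInstance]
          (fun ω => fun i => ((F i).rnDeriv (Q'.map X) (X ω)).toReal) :=
        (measurable_pi_lambda _ fun i =>
          (Measure.measurable_rnDeriv (F i) (Q'.map X)).ennreal_toReal).comp
          (Measurable.of_comap_le le_rfl)
      exact StronglyMeasurable.aestronglyMeasurable hmg.stronglyMeasurable
  · intro h i
    have hn0 : n ≠ 0 := i.pos.ne'
    set Q' : Measure Ω := (n : ℝ≥0∞)⁻¹ • ∑ j, Q j with hQ'def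
    have hQ'apply : ∀ s : Set Ω, Q' s = (n : ℝ≥0∞)⁻¹ * ∑ j, Q j s := by
      intro s
      simp [hQ'def, Measure.smul_apply, Measure.finset_sum_apply, smul_eq_mul]
    have hprob : IsProbabilityMeasure Q' := by
      constructor
      rw [hQ'apply]
      simp only [measure_univ, Finset.sum_const, Finset.card_univ, Fintype.card_fin,
        nsmul_eq_mul, mul_one]
      exact ENNReal.inv_mul_cancel (Nat.cast_ne_zero.mpr hn0) (ENNReal.natCast_ne_top n)
    have hac : ∀ j, Q j ≪ Q' := by
      intro j
      refine Measure.AbsolutelyContinuous.mk fun s _ hs => ?_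
      rw [hQ'apply] at hs
      have hsum : ∑ k, Q k s = 0 := by
        rcases mul_eq_zero.mp hs with h0 | h0
        · exact absurd h0 (ENNReal.inv_ne_zero.mpr (ENNReal.natCast_ne_top n))
        · exact h0
      exact (Finset.sum_eq_zero_iff.mp hsum) j (Finset.mem_univ j)
    obtain ⟨hacF, hae⟩ := h Q' hprob hac
    haveI := hprob
    haveI : IsProbabilityMeasure (Q'.map X) := Measure.isProbabilityMeasure_map hX.aemeasurable
    have hf_int : Integrable (fun ω => fun j => ((Q j).rnDeriv Q' ω).toReal) Q' :=
      integrable_pi_of_components (hrnmeas Q') (fun j => Measure.integrable_toReal_rnDeriv)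
    have hg_int : Integrable (fun ω => fun j => ((F j).rnDeriv (Q'.map X) (X ω)).toReal) Q' := by
      refine integrable_pi_of_components ?_ (fun j => ?_)
      · exact (measurable_pi_lambda _ fun j =>
          ((Measure.measurable_rnDeriv _ _).ennreal_toReal).comp hX).aestronglyMeasurable
      · exact (integrable_map_measure (hrnmeas' j Q') hX.aemeasurable).1
          Measure.integrable_toReal_rnDeriv
    ext s hs
    rw [Measure.map_apply hX hs]
    have e3 : ∫ ω in X ⁻¹' s, (fun j => ((F j).rnDeriv (Q'.map X) (X ω)).toReal) ∂Q'
        = ∫ ω in X ⁻¹' s, (fun j => ((Q j).rnDeriv Q' ω).toReal) ∂Q' := by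
      rw [integral_congr_ae (ae_restrict_of_ae hae),
        setIntegral_condExp hm hf_int ⟨s, hs, rfl⟩]
    have key : (Q i (X ⁻¹' s)).toReal = (F i s).toReal := by
      calc (Q i (X ⁻¹' s)).toReal
          = ∫ ω in X ⁻¹' s, ((Q i).rnDeriv Q' ω).toReal ∂Q' :=
            (Measure.setIntegral_toReal_rnDeriv (hac i) _).symm
        _ = (∫ ω in X ⁻¹' s, (fun j => ((Q j).rnDeriv Q' ω).toReal) ∂Q') i :=
            (integral_pi_eval hf_int.integrableOn i).symm
        _ = (∫ ω in X ⁻¹' s, (fun j => ((F j).rnDeriv (Q'.map X) (X ω)).toReal) ∂Q') i := by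
            rw [e3]
        _ = ∫ ω in X ⁻¹' s, ((F i).rnDeriv (Q'.map X) (X ω)).toReal ∂Q' :=
            integral_pi_eval hg_int.integrableOn i
        _ = (F i s).toReal := by
            rw [← setIntegral_map hs (hrnmeas' i Q') hX.aemeasurable,
              Measure.setIntegral_toReal_rnDeriv (hacF i), measureReal_def]
    exact (ENNReal.toReal_eq_toReal_iff' (measure_ne_top _ _) (measure_ne_top _ _)).mp key
end

section
/- Let $Q_1\ll Q_2$ be probability measures on $(\Omega,\mathcal A)$ and $F_1,F_2$ Borel probability measures on $\mathbb{R}$. Then there exists a measurable $X:\Omega\to\mathbb{R}$ with $Q_i\circ X^{-1}=F_i$ for $i=1,2$ if and only if there exists a measurable $X$ with $Q_2\circ X^{-1}=F_2$, $F_1\ll F_2$, and $\frac{dF_1}{dF_2}(X)=\mathbb{E}^{Q_2}[\frac{dQ_1}{dQ_2}\mid X]$ $Q_2$-almost surely. -/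
open MeasureTheory

/-- Corollary 2.3. For probability measures `Q₁ ≪ Q₂` on `(Ω, 𝒜)` and Borel
probability measures `F₁, F₂` on `ℝ`, `(Q₁,Q₂)` and `(F₁,F₂)` are compatible iff there exists a
random variable `X` with distribution `F₂` under `Q₂` such that `F₁ ≪ F₂` and
`(dF₁/dF₂)(X) = E^{Q₂}[dQ₁/dQ₂ | σ(X)]` `Q₂`-a.s. -/
theorem compatibility_two_measures
    {Ω : Type} [MeasurableSpace Ω]
    (Q₁ Q₂ : Measure Ω) [IsProbabilityMeasure Q₁] [IsProbabilityMeasure Q₂]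
    (h12 : Q₁ ≪ Q₂)
    (F₁ F₂ : Measure ℝ) [IsProbabilityMeasure F₁] [IsProbabilityMeasure F₂] :
    (∃ X : Ω → ℝ, Measurable X ∧ Q₁.map X = F₁ ∧ Q₂.map X = F₂) ↔
      (∃ X : Ω → ℝ, Measurable X ∧ Q₂.map X = F₂ ∧ F₁ ≪ F₂ ∧
        (fun ω => (F₁.rnDeriv F₂ (X ω)).toReal)
          =ᵐ[Q₂]
        Q₂[fun ω => (Q₁.rnDeriv Q₂ ω).toReal
            | MeasurableSpace.comap X inferInstance]) := by
  -- common computations for a random variable `X` with `Q₂.map X = F₂` and `F₁ ≪ F₂`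
  have hf_int : Integrable (fun ω => (Q₁.rnDeriv Q₂ ω).toReal) Q₂ :=
    Measure.integrable_toReal_rnDeriv
  have key : ∀ X : Ω → ℝ, Measurable X → Q₂.map X = F₂ → F₁ ≪ F₂ →
      Integrable (fun ω => (F₁.rnDeriv F₂ (X ω)).toReal) Q₂ ∧
      ∀ B : Set ℝ, MeasurableSet B →
        ∫ ω in X ⁻¹' B, (F₁.rnDeriv F₂ (X ω)).toReal ∂Q₂ = (F₁ B).toReal := by
    intro X hX hmap hac
    have hgmeas : Measurable fun y : ℝ => (F₁.rnDeriv F₂ y).toReal :=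
      (Measure.measurable_rnDeriv F₁ F₂).ennreal_toReal
    have hg_int : Integrable (fun y : ℝ => (F₁.rnDeriv F₂ y).toReal) F₂ :=
      Measure.integrable_toReal_rnDeriv
    constructor
    · have : Integrable (fun y : ℝ => (F₁.rnDeriv F₂ y).toReal) (Q₂.map X) := by
        rw [hmap]; exact hg_int
      exact (integrable_map_measure hgmeas.aestronglyMeasurable hX.aemeasurable).mp this
    · intro B hB
      rw [← setIntegral_map hB hgmeas.aestronglyMeasurable hX.aemeasurable, hmap,
        Measure.setIntegral_toReal_rnDeriv hac B]
      rfl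
  constructor
  · rintro ⟨X, hX, hQ1, hQ2⟩
    have hac : F₁ ≪ F₂ := by
      rw [← hQ1, ← hQ2]; exact h12.map hX
    obtain ⟨hg_int, hg_eq⟩ := key X hX hQ2 hac
    refine ⟨X, hX, hQ2, hac, ?_⟩
    have hm : MeasurableSpace.comap X inferInstance ≤ ‹MeasurableSpace Ω› := hX.comap_le
    haveI : SigmaFinite (Q₂.trim hm) := inferInstance
    refine ae_eq_condExp_of_forall_setIntegral_eq hm hf_int
      (fun s _ _ => hg_int.integrableOn) ?_ ?_
    · rintro s ⟨B, hB, rfl⟩ _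
      rw [hg_eq B hB, Measure.setIntegral_toReal_rnDeriv h12,
        Measure.real, ← Measure.map_apply hX hB, hQ1]
    · refine ⟨fun ω => (F₁.rnDeriv F₂ (X ω)).toReal, ?_, Filter.EventuallyEq.rfl⟩
      exact ((Measure.measurable_rnDeriv F₁ F₂).ennreal_toReal.comp
        (Measurable.of_comap_le le_rfl)).stronglyMeasurable
  · rintro ⟨X, hX, hQ2, hac, heq⟩
    refine ⟨X, hX, ?_, hQ2⟩
    obtain ⟨hg_int, hg_eq⟩ := key X hX hQ2 hac
    have hm : MeasurableSpace.comap X inferInstance ≤ ‹MeasurableSpace Ω› := hX.comap_le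
    haveI : SigmaFinite (Q₂.trim hm) := inferInstance
    ext B hB
    rw [Measure.map_apply hX hB]
    have hs : MeasurableSet[MeasurableSpace.comap X inferInstance] (X ⁻¹' B) := ⟨B, hB, rfl⟩
    have h1 : ∫ ω in X ⁻¹' B, (F₁.rnDeriv F₂ (X ω)).toReal ∂Q₂
        = ∫ ω in X ⁻¹' B, (Q₁.rnDeriv Q₂ ω).toReal ∂Q₂ := by
      calc ∫ ω in X ⁻¹' B, (F₁.rnDeriv F₂ (X ω)).toReal ∂Q₂
          = ∫ ω in X ⁻¹' B,
              (Q₂[fun ω => (Q₁.rnDeriv Q₂ ω).toReal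
                | MeasurableSpace.comap X inferInstance]) ω ∂Q₂ :=
            setIntegral_congr_ae (hm _ hs) (heq.mono fun x hx _ => hx)
        _ = ∫ ω in X ⁻¹' B, (Q₁.rnDeriv Q₂ ω).toReal ∂Q₂ :=
            setIntegral_condExp hm hf_int hs
    have h2 : (F₁ B).toReal = (Q₁ (X ⁻¹' B)).toReal := by
      rw [← hg_eq B hB, h1, Measure.setIntegral_toReal_rnDeriv h12]
      rfl
    exact ((ENNReal.toReal_eq_toReal_iff' (measure_ne_top _ _) (measure_ne_top _ _)).mp h2.symm)
end

section
/- Suppose $(Q_1,\dots,Q_n)$ and $(F_1,\dots,F_n)$ are compatible, i.e., there exists a measurable $X:\Omega\to\mathbb{R}$ with $Q_i\circ X^{-1}=F_i$ for all $i$. Then for every probability measure $Q$ dominating $(Q_1,\dots,Q_n)$ there exists a Borel probability measure $F$ on $\mathbb{R}$ dominating $(F_1,\dots,F_n)$ such that for every convex function $f:\mathbb{R}^n\to\mathbb{R}$, $\int_{\mathbb{R}} f(\frac{dF_1}{dF},\dots,\frac{dF_n}{dF})\,dF \le \int_{\Omega} f(\frac{dQ_1}{dQ},\dots,\frac{dQ_n}{dQ})\,dQ$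 (whenever both integrals are defined). -/
open MeasureTheory

/-- Lemma 3.3. If `(Q₁,…,Qₙ)` and `(F₁,…,Fₙ)` are compatible, then for every
probability measure `Q'` dominating each `Q i` there is a Borel probability measure `F'` on `ℝ`
dominating each `F i` such that for every convex `f : ℝⁿ → ℝ` (whenever both integrals are
defined), `∫ f(dF₁/dF', …, dFₙ/dF') dF' ≤ ∫ f(dQ₁/dQ', …, dQₙ/dQ') dQ'`. -/
theorem compatible_implies_convex_order
    {Ω : Type} [MeasurableSpace Ω] (n : ℕ)
    (Q : Fin n → Measure Ω) (F : Fin n → Measure ℝ)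
    [∀ i, IsProbabilityMeasure (Q i)] [∀ i, IsProbabilityMeasure (F i)]
    (hcomp : ∃ X : Ω → ℝ, Measurable X ∧ ∀ i, (Q i).map X = F i) :
    ∀ Q' : Measure Ω, IsProbabilityMeasure Q' → (∀ i, Q i ≪ Q') →
      ∃ F' : Measure ℝ, IsProbabilityMeasure F' ∧ (∀ i, F i ≪ F') ∧
        ∀ f : (Fin n → ℝ) → ℝ, ConvexOn ℝ Set.univ f →
          Integrable (fun x => f (fun i => ((F i).rnDeriv F' x).toReal)) F' →
          Integrable (fun ω => f (fun i => ((Q i).rnDeriv Q' ω).toReal)) Q' →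
          ∫ x, f (fun i => ((F i).rnDeriv F' x).toReal) ∂F' ≤
            ∫ ω, f (fun i => ((Q i).rnDeriv Q' ω).toReal) ∂Q' := by
  obtain ⟨X, hX, hQF⟩ := hcomp
  intro Q' hQ'prob hQQ'
  refine ⟨Q'.map X, Measure.isProbabilityMeasure_map hX.aemeasurable, ?_, ?_⟩
  · intro i
    rw [← hQF i]
    exact Measure.AbsolutelyContinuous.map (hQQ' i) hX
  intro f hconv hFint hQint
  set F' : Measure ℝ := Q'.map X with hF'def
  have hFF' : ∀ i, F i ≪ F' := by
    intro i
    rw [← hQF i]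
    exact Measure.AbsolutelyContinuous.map (hQQ' i) hX
  -- the vector of RN derivatives on Ω
  set V : Ω → (Fin n → ℝ) := fun ω => fun i => ((Q i).rnDeriv Q' ω).toReal with hVdef
  have hVmeas : Measurable V :=
    measurable_pi_lambda _ fun i => ((Q i).measurable_rnDeriv Q').ennreal_toReal
  have hVint_i : ∀ i, Integrable (fun ω => V ω i) Q' := fun i =>
    Measure.integrable_toReal_rnDeriv
  have hVnn : ∀ ω i, 0 ≤ V ω i := fun ω i => ENNReal.toReal_nonneg
  have hVint : Integrable V Q' := by
    have hs : Integrable (fun ω => ∑ i, V ω i) Q' :=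
      integrable_finset_sum _ fun i _ => hVint_i i
    refine hs.mono' hVmeas.aestronglyMeasurable ?_
    refine Filter.Eventually.of_forall fun ω => ?_
    rw [pi_norm_le_iff_of_nonneg (Finset.sum_nonneg fun i _ => hVnn ω i)]
    intro i
    rw [Real.norm_of_nonneg (hVnn ω i)]
    exact Finset.single_le_sum (fun j _ => hVnn ω j) (Finset.mem_univ i)
  -- continuity of f
  have hfc : Continuous f := by
    rw [← continuousOn_univ]
    exact hconv.continuousOn isOpen_univ
  -- the joint distribution of (X, V) under Q'
  set ρ : Measure (ℝ × (Fin n → ℝ)) := Q'.map (fun ω => (X ω, V ω)) with hρdef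
  have hXV : Measurable fun ω => (X ω, V ω) := hX.prodMk hVmeas
  have hρ_prob : IsProbabilityMeasure ρ := Measure.isProbabilityMeasure_map hXV.aemeasurable
  have hfst : ρ.fst = F' := Measure.fst_map_prodMk₀ hVmeas.aemeasurable
  have hmi : ∀ i, Measurable fun p : ℝ × (Fin n → ℝ) => p.2 i := fun i =>
    (measurable_pi_apply i).comp measurable_snd
  -- integrability of coordinates w.r.t. ρ
  have hρ_int_i : ∀ i, Integrable (fun p : ℝ × (Fin n → ℝ) => p.2 i) ρ := by
    intro i
    rw [hρdef]
    exact (integrable_map_measure (hmi i).aestronglyMeasurable hXV.aemeasurable).mpr (hVint_i i)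
  have hρ_int_snd : Integrable (fun p : ℝ × (Fin n → ℝ) => p.2) ρ := by
    rw [hρdef]
    exact (integrable_map_measure measurable_snd.aestronglyMeasurable hXV.aemeasurable).mpr hVint
  have hρ_int_f : Integrable (fun p : ℝ × (Fin n → ℝ) => f p.2) ρ := by
    rw [hρdef]
    exact (integrable_map_measure (hfc.comp continuous_snd).aestronglyMeasurable
      hXV.aemeasurable).mpr hQint
  -- identification of the RN derivatives of F i w.r.t. F' with conditional means
  have hkey : ∀ i, (fun x => ((F i).rnDeriv F' x).toReal)
      =ᵐ[F'] fun x => ∫ y, y i ∂ρ.condKernel x := by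
    intro i
    have h1 : Integrable (fun x => ((F i).rnDeriv F' x).toReal) F' :=
      Measure.integrable_toReal_rnDeriv
    have h2 : Integrable (fun x => ∫ y, y i ∂ρ.condKernel x) F' := by
      rw [← hfst]; exact (hρ_int_i i).integral_condKernel
    refine Integrable.ae_eq_of_forall_setIntegral_eq _ _ h1 h2 fun A hA _ => ?_
    have e1 : ∫ x in A, ((F i).rnDeriv F' x).toReal ∂F' = ((F i) A).toReal :=
      Measure.setIntegral_toReal_rnDeriv (hFF' i) A
    have e2 : ∫ x in A, ∫ y, y i ∂ρ.condKernel x ∂F'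
        = ∫ p in A ×ˢ Set.univ, (fun p : ℝ × (Fin n → ℝ) => p.2 i) p ∂ρ := by
      rw [← hfst]
      exact Measure.setIntegral_condKernel_univ_right hA ((hρ_int_i i).integrableOn)
    have hpre : (fun ω => (X ω, V ω)) ⁻¹' (A ×ˢ Set.univ) = X ⁻¹' A := by
      ext ω; simp [Set.mem_prod]
    have e3 : ∫ p in A ×ˢ Set.univ, (fun p : ℝ × (Fin n → ℝ) => p.2 i) p ∂ρ
        = ∫ ω in X ⁻¹' A, V ω i ∂Q' := by
      rw [hρdef]
      rw [setIntegral_map (hA.prod MeasurableSet.univ) (hmi i).aestronglyMeasurable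
        hXV.aemeasurable]
      rw [hpre]
    have e4 : ∫ ω in X ⁻¹' A, V ω i ∂Q' = ((Q i) (X ⁻¹' A)).toReal :=
      Measure.setIntegral_toReal_rnDeriv (hQQ' i) _
    rw [e1, e2, e3, e4, ← hQF i, Measure.map_apply hX hA]
  -- combine the coordinatewise identifications
  have hkey' : ∀ᵐ x ∂F', (fun i => ((F i).rnDeriv F' x).toReal)
      = fun i => ∫ y, y i ∂ρ.condKernel x := by
    filter_upwards [ae_all_iff.mpr hkey] with x hx
    funext i
    exact hx i
  -- a.e. integrability of the identity and of f under the conditional kernels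
  have hae_int_id : ∀ᵐ x ∂F', Integrable (fun y : Fin n → ℝ => y) (ρ.condKernel x) := by
    rw [← hfst]; exact hρ_int_snd.condKernel_ae
  have hae_int_f : ∀ᵐ x ∂F', Integrable (fun y : Fin n → ℝ => f y) (ρ.condKernel x) := by
    rw [← hfst]; exact hρ_int_f.condKernel_ae
  -- mean vector equals the vector of coordinate means, a.e.
  have hmean : ∀ᵐ x ∂F', (fun i => ∫ y, y i ∂ρ.condKernel x)
      = ∫ y, y ∂ρ.condKernel x := by
    filter_upwards [hae_int_id] with x hx
    funext i
    have h := ContinuousLinearMap.integral_comp_comm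
      (ContinuousLinearMap.proj (R := ℝ) (φ := fun _ : Fin n => ℝ) i) hx
    simpa [ContinuousLinearMap.proj_apply] using h
  -- pointwise Jensen a.e.
  have hjensen : ∀ᵐ x ∂F', f (∫ y, y ∂ρ.condKernel x) ≤ ∫ y, f y ∂ρ.condKernel x := by
    filter_upwards [hae_int_id, hae_int_f] with x h1 h2
    exact hconv.map_integral_le hfc.continuousOn isClosed_univ
      (Filter.Eventually.of_forall fun _ => Set.mem_univ _) h1 h2
  -- rewrite the LHS integrand a.e.
  have hLHS_eq : (fun x => f (fun i => ((F i).rnDeriv F' x).toReal))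
      =ᵐ[F'] fun x => f (∫ y, y ∂ρ.condKernel x) := by
    filter_upwards [hkey', hmean] with x h1 h2
    rw [h1, h2]
  have hint_left : Integrable (fun x => f (∫ y, y ∂ρ.condKernel x)) F' :=
    hFint.congr hLHS_eq
  have hint_right : Integrable (fun x => ∫ y, f y ∂ρ.condKernel x) F' := by
    rw [← hfst]; exact hρ_int_f.integral_condKernel
  calc ∫ x, f (fun i => ((F i).rnDeriv F' x).toReal) ∂F'
      = ∫ x, f (∫ y, y ∂ρ.condKernel x) ∂F' := integral_congr_ae hLHS_eq
    _ ≤ ∫ x, ∫ y, f y ∂ρ.condKernel x ∂F' :=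
        integral_mono_ae hint_left hint_right hjensen
    _ = ∫ p, f p.2 ∂ρ := by
        rw [← hfst]; exact Measure.integral_condKernel hρ_int_f
    _ = ∫ ω, f (V ω) ∂Q' := by
        rw [hρdef]
        exact integral_map hXV.aemeasurable (hfc.comp continuous_snd).aestronglyMeasurable
    _ = ∫ ω, f (fun i => ((Q i).rnDeriv Q' ω).toReal) ∂Q' := rfl
end

section
/- Let $P_1,\dots,P_n$ and $Q_1,\dots,Q_n$ be probability measures on measurable spaces $(\Omega_1,\mathcal A_1)$ and $(\Omega_2,\mathcal A_2)$ respectively. If there exist reference probability measures $P$ dominating $(P_1,\dots,P_n)$ and $Q$ dominating $(Q_1,\dots,Q_n)$ such that $(\frac{dP_1}{dP},\dots,\frac{dP_n}{dP})$ under $P$ is dominated in convex order by $(\frac{dQ_1}{dQ},\dots,\frac{dQ_n}{dQ})$ under $Q$, then the same convex order relation holds with $P=\frac1n\sum_{i=1}^n P_i$ and $Q=\frac1n\sum_{i=1}^n Q_i$. -/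
open MeasureTheory
open scoped ENNReal

/-- Approximate subgradient: a convex function on a finite-dimensional space admits, at every
point and accuracy `ε`, a globally minorizing continuous affine map coming within `ε`. -/
lemma exists_affine_minorant {E : Type*} [NormedAddCommGroup E] [NormedSpace ℝ E]
    [FiniteDimensional ℝ E] {f : E → ℝ} (hf : ConvexOn ℝ Set.univ f)
    (y : E) {ε : ℝ} (hε : 0 < ε) :
    ∃ (ψ : E →L[ℝ] ℝ) (b : ℝ), (∀ x, ψ x + b ≤ f x) ∧ f y - ε < ψ y + b := by
  have hcont : Continuous f := by
    rw [← continuousOn_univ]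
    exact hf.continuousOn isOpen_univ
  set epi : Set (E × ℝ) := {p : E × ℝ | f p.1 ≤ p.2} with hepi
  have hconv : Convex ℝ epi := by
    have := hf.convex_epigraph
    simpa [hepi] using this
  have hclosed : IsClosed epi := isClosed_le (hcont.comp continuous_fst) continuous_snd
  have hnot : (y, f y - ε) ∉ epi := by
    simp only [hepi, Set.mem_setOf_eq]
    push_neg
    linarith
  obtain ⟨l, u, hlt, hgt⟩ := geometric_hahn_banach_point_closed hconv hclosed hnot
  set c : ℝ := l (0, 1) with hc
  have hdecomp : ∀ (x : E) (t : ℝ), l (x, t) = l (x, 0) + t * c := by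
    intro x t
    have : (x, t) = (x, 0) + t • ((0 : E), (1 : ℝ)) := by
      simp [Prod.ext_iff]
    rw [this, map_add, l.map_smul, smul_eq_mul, hc]
  have hepi_mem : ∀ (x : E) (t : ℝ), f x ≤ t → u < l (x, 0) + t * c := by
    intro x t ht
    have := hgt (x, t) ht
    rwa [hdecomp] at this
  have hc_nonneg : 0 ≤ c := by
    by_contra h
    push_neg at h
    set t : ℝ := max (f y) ((u - l (y, 0)) / c) with htdef
    have h1 : u < l (y, 0) + t * c := hepi_mem y t (le_max_left _ _)
    have h2 : t * c ≤ u - l (y, 0) := by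
      have := le_max_right (f y) ((u - l (y, 0)) / c)
      have h3 : t * c ≤ ((u - l (y, 0)) / c) * c :=
        mul_le_mul_of_nonpos_right this h.le
      rwa [div_mul_cancel₀ _ h.ne] at h3
    linarith
  have hc_ne : c ≠ 0 := by
    intro h0
    have h1 : u < l (y, 0) + f y * c := hepi_mem y (f y) le_rfl
    have h2 : l (y, f y - ε) < u := hlt
    rw [hdecomp] at h2
    rw [h0] at h1 h2
    linarith
  have hc_pos : 0 < c := lt_of_le_of_ne hc_nonneg (Ne.symm hc_ne)
  refine ⟨c⁻¹ • (-(l.comp (ContinuousLinearMap.inl ℝ E ℝ))), u / c, ?_, ?_⟩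
  · intro x
    have h1 : u < l (x, 0) + f x * c := hepi_mem x (f x) le_rfl
    have : (u - l (x, 0)) / c < f x := by
      rw [div_lt_iff₀ hc_pos]
      linarith [mul_comm (f x) c]
    refine le_of_lt (lt_of_le_of_lt (le_of_eq ?_) this)
    simp [ContinuousLinearMap.smul_apply, ContinuousLinearMap.comp_apply,
      ContinuousLinearMap.inl_apply]
    field_simp
    ring
  · have h2 : l (y, f y - ε) < u := hlt
    rw [hdecomp] at h2
    have : f y - ε < (u - l (y, 0)) / c := by
      rw [lt_div_iff₀ hc_pos]
      nlinarith
    refine lt_of_lt_of_le this (le_of_eq ?_)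
    simp [ContinuousLinearMap.smul_apply, ContinuousLinearMap.comp_apply,
      ContinuousLinearMap.inl_apply]
    field_simp
    ring

section MeasureHelpers

variable {Ω : Type} [MeasurableSpace Ω]

lemma rnDeriv_finset_sum {ι : Type*} (s : Finset ι) (P : ι → Measure Ω)
    [∀ i, IsFiniteMeasure (P i)] (μ : Measure Ω) [SigmaFinite μ] :
    (∑ j ∈ s, P j).rnDeriv μ =ᵐ[μ] fun x => ∑ j ∈ s, (P j).rnDeriv μ x := by
  classical
  induction s using Finset.induction_on with
  | empty =>
    filter_upwards [Measure.rnDeriv_zero μ] with x hx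
    simpa using hx
  | insert a s ha ih =>
    rw [Finset.sum_insert ha]
    have h1 := Measure.rnDeriv_add (P a) (∑ j ∈ s, P j) μ
    filter_upwards [h1, ih] with x hx1 hx2
    rw [hx1, Pi.add_apply, hx2, Finset.sum_insert ha]

variable (n : ℕ) (P : Fin n → Measure Ω) [∀ i, IsProbabilityMeasure (P i)]

lemma avg_isProb (hn : 0 < n) : IsProbabilityMeasure ((n : ℝ≥0∞)⁻¹ • ∑ j, P j) := by
  constructor
  rw [Measure.smul_apply, smul_eq_mul]
  have : (∑ j, P j) Set.univ = n := by
    rw [Measure.finset_sum_apply]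
    simp [measure_univ]
  rw [this, ENNReal.inv_mul_cancel (by exact_mod_cast hn.ne') (by simp)]

lemma avg_ac (P' : Measure Ω) (hac : ∀ i, P i ≪ P') :
    ((n : ℝ≥0∞)⁻¹ • ∑ j, P j) ≪ P' := by
  refine Measure.AbsolutelyContinuous.trans Measure.smul_absolutelyContinuous ?_
  intro s hs
  rw [Measure.finset_sum_apply]
  exact Finset.sum_eq_zero fun i _ => hac i hs

lemma ac_avg (hn : 0 < n) (i : Fin n) : P i ≪ ((n : ℝ≥0∞)⁻¹ • ∑ j, P j) := by
  refine Measure.AbsolutelyContinuous.trans ?_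
    (Measure.absolutelyContinuous_smul (by simp [hn.ne'] : (n : ℝ≥0∞)⁻¹ ≠ 0))
  refine Measure.absolutelyContinuous_of_le ?_
  rw [← Measure.sum_fintype]
  exact Measure.le_sum _ i

end MeasureHelpers

section AE
variable {Ω : Type} [MeasurableSpace Ω] (n : ℕ) (P : Fin n → Measure Ω)
  [∀ i, IsProbabilityMeasure (P i)]

lemma ae_rel (hn : 0 < n) (P' : Measure Ω) [IsProbabilityMeasure P'] (hac : ∀ i, P i ≪ P') :
    ∀ᵐ x ∂P',
      (∀ i, ((P i).rnDeriv P' x).toReal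
          = ((P i).rnDeriv ((n : ℝ≥0∞)⁻¹ • ∑ j, P j) x).toReal
            * (((n : ℝ≥0∞)⁻¹ • ∑ j, P j).rnDeriv P' x).toReal)
      ∧ (∑ i, ((P i).rnDeriv P' x).toReal)
          = n * (((n : ℝ≥0∞)⁻¹ • ∑ j, P j).rnDeriv P' x).toReal := by
  haveI := avg_isProb n P hn
  haveI : IsFiniteMeasure (∑ j, P j) := by
    constructor
    rw [Measure.finset_sum_apply]
    simp [measure_univ]
  have h1 : ∀ᵐ x ∂P', ∀ i, ((P i).rnDeriv ((n : ℝ≥0∞)⁻¹ • ∑ j, P j) x)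
      * (((n : ℝ≥0∞)⁻¹ • ∑ j, P j).rnDeriv P' x) = (P i).rnDeriv P' x := by
    rw [ae_all_iff]
    intro i
    exact Measure.rnDeriv_mul_rnDeriv (ac_avg n P hn i)
  have h2 := rnDeriv_finset_sum (Finset.univ) P P'
  have h3 := Measure.rnDeriv_smul_left_of_ne_top (∑ j, P j) P'
    (ENNReal.inv_ne_top.mpr (Nat.cast_ne_zero.mpr hn.ne'))
  have h4 : ∀ᵐ x ∂P', ∀ i, (P i).rnDeriv P' x < ∞ := by
    rw [ae_all_iff]
    intro i
    exact Measure.rnDeriv_lt_top (P i) P'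
  filter_upwards [h1, h2, h3, h4] with x hx1 hx2 hx3 hx4
  constructor
  · intro i
    rw [← hx1 i, ENNReal.toReal_mul]
  · have hs : (((n : ℝ≥0∞)⁻¹ • ∑ j, P j).rnDeriv P' x).toReal
        = (n : ℝ)⁻¹ * ((∑ j, P j).rnDeriv P' x).toReal := by
      rw [hx3]
      simp [ENNReal.toReal_mul]
    rw [hs, hx2]
    rw [ENNReal.toReal_sum (fun i _ => (hx4 i).ne)]
    rw [← mul_assoc, mul_inv_cancel₀ (by exact_mod_cast hn.ne' : (n : ℝ) ≠ 0), one_mul]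

lemma ae_sum_eq (hn : 0 < n) (P' : Measure Ω) [IsProbabilityMeasure P'] (hac : ∀ i, P i ≪ P') :
    ∀ᵐ x ∂((n : ℝ≥0∞)⁻¹ • ∑ j, P j),
      ∑ i, ((P i).rnDeriv ((n : ℝ≥0∞)⁻¹ • ∑ j, P j) x).toReal = n := by
  haveI := avg_isProb n P hn
  have hbac := avg_ac n P P' hac
  have h1 := (ae_rel n P hn P' hac).filter_mono hbac.ae_le
  have h2 := Measure.rnDeriv_pos hbac
  have h3 := (Measure.rnDeriv_lt_top ((n : ℝ≥0∞)⁻¹ • ∑ j, P j) P').filter_mono hbac.ae_le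
  filter_upwards [h1, h2, h3] with x hx1 hx2 hx3
  have hs : 0 < (((n : ℝ≥0∞)⁻¹ • ∑ j, P j).rnDeriv P' x).toReal :=
    ENNReal.toReal_pos hx2.ne' hx3.ne
  have := hx1.2
  have heq : (∑ i, ((P i).rnDeriv ((n : ℝ≥0∞)⁻¹ • ∑ j, P j) x).toReal)
      * (((n : ℝ≥0∞)⁻¹ • ∑ j, P j).rnDeriv P' x).toReal
      = n * (((n : ℝ≥0∞)⁻¹ • ∑ j, P j).rnDeriv P' x).toReal := by
    rw [← this, Finset.sum_mul]
    exact Finset.sum_congr rfl fun i _ => (hx1.1 i).symm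
  exact mul_right_cancel₀ hs.ne' heq

end AE

section SupLemmas

variable {ι : Type*}

lemma convexOn_linear_component (n : ℕ) (ψ : (Fin n → ℝ) →L[ℝ] ℝ) (b : ℝ) :
    ConvexOn ℝ Set.univ (fun z : Fin n → ℝ => ψ z + b * ((n : ℝ)⁻¹ * ∑ i, z i)) := by
  refine ⟨convex_univ, ?_⟩
  intro x _ y _ a c _ _ _
  apply le_of_eq
  have hsum : ∑ i, (a • x + c • y) i = a * ∑ i, x i + c * ∑ i, y i := by
    simp [Finset.sum_add_distrib, Finset.mul_sum]
  simp only [map_add, ContinuousLinearMap.map_smul, hsum, smul_eq_mul]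
  ring

lemma convexOn_finset_sup' {n : ℕ} (t : Finset ι) (ht : t.Nonempty)
    (g : ι → (Fin n → ℝ) → ℝ) (hg : ∀ j ∈ t, ConvexOn ℝ Set.univ (g j)) :
    ConvexOn ℝ Set.univ (fun z => t.sup' ht (fun j => g j z)) := by
  induction ht using Finset.Nonempty.cons_induction with
  | singleton a =>
    exact hg a (Finset.mem_singleton_self a)
  | cons a s ha hs ih =>
    have h1 : ConvexOn ℝ Set.univ (g a) := hg a (by simp)
    have h2 := ih (fun j hj => hg j (Finset.mem_cons_of_mem hj))
    convert h1.sup h2 using 1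
    · rfl
    · rfl
    funext z
    exact Finset.sup'_cons hs _

lemma integrable_finset_sup' {Ω : Type} [MeasurableSpace Ω] {μ : Measure Ω}
    (t : Finset ι) (ht : t.Nonempty) (g : ι → Ω → ℝ)
    (hg : ∀ j ∈ t, Integrable (g j) μ) :
    Integrable (fun x => t.sup' ht (fun j => g j x)) μ := by
  induction ht using Finset.Nonempty.cons_induction with
  | singleton a =>
    exact hg a (Finset.mem_singleton_self a)
  | cons a s ha hs ih =>
    have h2 := ih fun j hj => hg j (Finset.mem_cons_of_mem hj)
    convert (hg a (by simp)).sup h2 using 1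
    funext z
    exact Finset.sup'_cons hs _

end SupLemmas

section Transfer

variable {Ω : Type} [MeasurableSpace Ω] {ι : Type*}

lemma integrable_G (n : ℕ) (P : Fin n → Measure Ω) [∀ i, IsProbabilityMeasure (P i)]
    (P' : Measure Ω) [IsProbabilityMeasure P']
    (t : Finset ι) (ht : t.Nonempty) (ψ : ι → (Fin n → ℝ) →L[ℝ] ℝ) (b : ι → ℝ) :
    Integrable (fun x => t.sup' ht (fun j =>
      ψ j (fun i => ((P i).rnDeriv P' x).toReal)
        + b j * ((n : ℝ)⁻¹ * ∑ i, ((P i).rnDeriv P' x).toReal))) P' := by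
  refine integrable_finset_sup' t ht _ (fun j _ => ?_)
  have hui : ∀ i : Fin n, Integrable (fun x => ((P i).rnDeriv P' x).toReal) P' :=
    fun i => Measure.integrable_toReal_rnDeriv
  have hpsi : Integrable (fun x => ψ j (fun i => ((P i).rnDeriv P' x).toReal)) P' := by
    have heq : (fun x => ψ j (fun i => ((P i).rnDeriv P' x).toReal))
        = fun x => ∑ i, ((P i).rnDeriv P' x).toReal
            * ψ j (fun k => if i = k then 1 else 0) := by
      funext x
      conv_lhs => rw [pi_eq_sum_univ (fun i => ((P i).rnDeriv P' x).toReal)]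
      rw [map_sum]
      simp [smul_eq_mul]
    rw [heq]
    exact integrable_finset_sum _ fun i _ => (hui i).mul_const _
  have hsum : Integrable (fun x => ∑ i, ((P i).rnDeriv P' x).toReal) P' :=
    integrable_finset_sum _ fun i _ => hui i
  have h2 : Integrable (fun x => b j * ((n : ℝ)⁻¹ * ∑ i, ((P i).rnDeriv P' x).toReal)) P' := by
    simpa [mul_assoc] using hsum.const_mul (b j * (n : ℝ)⁻¹)
  exact hpsi.add h2

lemma transfer_eq (n : ℕ) (hn : 0 < n) (P : Fin n → Measure Ω)
    [∀ i, IsProbabilityMeasure (P i)]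
    (P' : Measure Ω) [IsProbabilityMeasure P'] (hac : ∀ i, P i ≪ P')
    (t : Finset ι) (ht : t.Nonempty) (ψ : ι → (Fin n → ℝ) →L[ℝ] ℝ) (b : ι → ℝ) :
    ∫ x, t.sup' ht (fun j =>
        ψ j (fun i => ((P i).rnDeriv P' x).toReal)
          + b j * ((n : ℝ)⁻¹ * ∑ i, ((P i).rnDeriv P' x).toReal)) ∂P'
      = ∫ x, t.sup' ht (fun j =>
          ψ j (fun i => ((P i).rnDeriv ((n : ℝ≥0∞)⁻¹ • ∑ k, P k) x).toReal) + b j)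
          ∂((n : ℝ≥0∞)⁻¹ • ∑ k, P k) := by
  haveI := avg_isProb n P hn
  have hbac := avg_ac n P P' hac
  rw [← integral_rnDeriv_smul hbac]
  refine integral_congr_ae ?_
  filter_upwards [ae_rel n P hn P' hac] with x hx
  set s : ℝ := ((((n : ℝ≥0∞)⁻¹ • ∑ k, P k)).rnDeriv P' x).toReal with hs
  have hs0 : 0 ≤ s := ENNReal.toReal_nonneg
  have hu : (fun i => ((P i).rnDeriv P' x).toReal)
      = s • (fun i => ((P i).rnDeriv ((n : ℝ≥0∞)⁻¹ • ∑ k, P k) x).toReal) := by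
    funext i
    simp only [Pi.smul_apply, smul_eq_mul]
    rw [hx.1 i]; ring
  have hsum : (n : ℝ)⁻¹ * ∑ i, ((P i).rnDeriv P' x).toReal = s := by
    rw [hx.2, ← mul_assoc, inv_mul_cancel₀ (by exact_mod_cast hn.ne' : (n : ℝ) ≠ 0), one_mul]
  have hcomp : ∀ j, ψ j (fun i => ((P i).rnDeriv P' x).toReal)
      + b j * ((n : ℝ)⁻¹ * ∑ i, ((P i).rnDeriv P' x).toReal)
      = s * (ψ j (fun i => ((P i).rnDeriv ((n : ℝ≥0∞)⁻¹ • ∑ k, P k) x).toReal) + b j) := by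
    intro j
    rw [hsum, hu, (ψ j).map_smul]
    simp only [smul_eq_mul]
    ring
  calc t.sup' ht (fun j =>
        ψ j (fun i => ((P i).rnDeriv P' x).toReal)
          + b j * ((n : ℝ)⁻¹ * ∑ i, ((P i).rnDeriv P' x).toReal))
      = t.sup' ht (fun j => s *
          (ψ j (fun i => ((P i).rnDeriv ((n : ℝ≥0∞)⁻¹ • ∑ k, P k) x).toReal) + b j)) := by
        exact Finset.sup'_congr ht rfl (fun j _ => hcomp j)
    _ = s * t.sup' ht (fun j =>
          ψ j (fun i => ((P i).rnDeriv ((n : ℝ≥0∞)⁻¹ • ∑ k, P k) x).toReal) + b j) := by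
        exact (Finset.comp_sup'_eq_sup'_comp ht (fun r => s * r)
          (fun r r' => mul_max_of_nonneg r r' hs0)).symm
    _ = _ := by rw [smul_eq_mul]

end Transfer

section Simplex

lemma isCompact_simplex (n : ℕ) :
    IsCompact {z : Fin n → ℝ | (∀ i, 0 ≤ z i) ∧ ∑ i, z i = (n : ℝ)} := by
  have h1 : IsClosed {z : Fin n → ℝ | ∀ i, 0 ≤ z i} := by
    have : {z : Fin n → ℝ | ∀ i, 0 ≤ z i} = ⋂ i, {z | 0 ≤ z i} := by ext; simp
    rw [this]
    exact isClosed_iInter fun i => isClosed_le continuous_const (continuous_apply i)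
  have h2 : IsClosed {z : Fin n → ℝ | ∑ i, z i = (n : ℝ)} :=
    isClosed_eq (continuous_finset_sum _ fun i _ => continuous_apply i) continuous_const
  have hsub : {z : Fin n → ℝ | (∀ i, 0 ≤ z i) ∧ ∑ i, z i = (n : ℝ)}
      ⊆ Set.Icc (0 : Fin n → ℝ) (fun _ => (n : ℝ)) := by
    rintro z ⟨hz1, hz2⟩
    constructor
    · intro i; exact hz1 i
    · intro i
      calc z i ≤ ∑ k, z k := Finset.single_le_sum (fun k _ => hz1 k) (Finset.mem_univ i)
        _ = (n : ℝ) := hz2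
  refine IsCompact.of_isClosed_subset isCompact_Icc ?_ hsub
  exact IsClosed.inter h1 h2

lemma exists_finite_affine_approx (n : ℕ) (hn : 0 < n) {f : (Fin n → ℝ) → ℝ}
    (hf : ConvexOn ℝ Set.univ f) {ε : ℝ} (hε : 0 < ε) :
    ∃ (t : Finset (Fin n → ℝ)) (ht : t.Nonempty)
      (ψ : (Fin n → ℝ) → ((Fin n → ℝ) →L[ℝ] ℝ)) (b : (Fin n → ℝ) → ℝ),
      (∀ j z, ψ j z + b j ≤ f z) ∧
      (∀ z ∈ {z : Fin n → ℝ | (∀ i, 0 ≤ z i) ∧ ∑ i, z i = (n : ℝ)},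
        f z - ε ≤ t.sup' ht (fun j => ψ j z + b j)) := by
  have hcont : Continuous f := by
    rw [← continuousOn_univ]
    exact hf.continuousOn isOpen_univ
  have hchoice : ∀ y : Fin n → ℝ, ∃ (ψ : (Fin n → ℝ) →L[ℝ] ℝ) (b : ℝ),
      (∀ x, ψ x + b ≤ f x) ∧ f y - ε / 2 < ψ y + b :=
    fun y => exists_affine_minorant hf y (half_pos hε)
  choose ψ b hle htouch using hchoice
  set S := {z : Fin n → ℝ | (∀ i, 0 ≤ z i) ∧ ∑ i, z i = (n : ℝ)} with hS
  set U : (Fin n → ℝ) → Set (Fin n → ℝ) := fun y => {x | f x - ε < ψ y x + b y} with hU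
  have hUopen : ∀ y, IsOpen (U y) :=
    fun y => isOpen_lt (hcont.sub continuous_const) ((ψ y).continuous.add continuous_const)
  have hcover : S ⊆ ⋃ y, U y := by
    intro x _
    refine Set.mem_iUnion.mpr ⟨x, ?_⟩
    have := htouch x
    simp only [hU, Set.mem_setOf_eq]
    linarith
  obtain ⟨t, htcover⟩ := (isCompact_simplex n).elim_finite_subcover U hUopen hcover
  have hSne : ((fun _ => (1 : ℝ)) : Fin n → ℝ) ∈ S := by
    constructor
    · intro i; norm_num
    · simp
  have ht : t.Nonempty := by
    have := htcover hSne
    rw [Set.mem_iUnion₂] at this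
    obtain ⟨y, hy, _⟩ := this
    exact ⟨y, hy⟩
  refine ⟨t, ht, ψ, b, fun j z => hle j z, ?_⟩
  intro z hz
  have := htcover hz
  rw [Set.mem_iUnion₂] at this
  obtain ⟨y, hyt, hyU⟩ := this
  have h1 : f z - ε < ψ y z + b y := hyU
  exact le_trans h1.le (Finset.le_sup' (fun j => ψ j z + b j) hyt)

lemma integrable_comp_continuous {Ω : Type} [MeasurableSpace Ω] {n : ℕ}
    (μ : Measure Ω) [IsProbabilityMeasure μ] {v : Ω → (Fin n → ℝ)} (hv : Measurable v)
    {S : Set (Fin n → ℝ)} (hS : IsCompact S) (hae : ∀ᵐ x ∂μ, v x ∈ S)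
    {g : (Fin n → ℝ) → ℝ} (hg : Continuous g) :
    Integrable (fun x => g (v x)) μ := by
  obtain ⟨C, hC⟩ := hS.exists_bound_of_continuousOn hg.continuousOn
  refine Integrable.mono' (integrable_const C) ((hg.measurable.comp hv).aestronglyMeasurable) ?_
  filter_upwards [hae] with x hx
  exact hC _ hx

end Simplex

/-- Lemma 3.5, (i) ⇒ (ii). If the vector of Radon–Nikodym derivatives of
`(P₁,…,Pₙ)` with respect to some dominating reference probability measure `P'` is dominated
in multivariate convex order (expectations taken whenever they exist) by that of `(Q₁,…,Qₙ)`
with respect to some dominating reference `Q'`, then the same convex order relation holds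
with the averages `P = (1/n)∑ Pᵢ` and `Q = (1/n)∑ Qᵢ` as reference measures. -/
theorem convex_order_transfers_to_averages
    {Ω₁ Ω₂ : Type} [MeasurableSpace Ω₁] [MeasurableSpace Ω₂]
    (n : ℕ) (hn : 0 < n)
    (P : Fin n → Measure Ω₁) (Q : Fin n → Measure Ω₂)
    [∀ i, IsProbabilityMeasure (P i)] [∀ i, IsProbabilityMeasure (Q i)]
    (hex : ∃ (P' : Measure Ω₁) (Q' : Measure Ω₂),
      IsProbabilityMeasure P' ∧ IsProbabilityMeasure Q' ∧
      (∀ i, P i ≪ P') ∧ (∀ i, Q i ≪ Q') ∧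
      ∀ f : (Fin n → ℝ) → ℝ, ConvexOn ℝ Set.univ f →
        Integrable (fun x => f (fun i => ((P i).rnDeriv P' x).toReal)) P' →
        Integrable (fun ω => f (fun i => ((Q i).rnDeriv Q' ω).toReal)) Q' →
        ∫ x, f (fun i => ((P i).rnDeriv P' x).toReal) ∂P' ≤
          ∫ ω, f (fun i => ((Q i).rnDeriv Q' ω).toReal) ∂Q') :
    ∀ f : (Fin n → ℝ) → ℝ, ConvexOn ℝ Set.univ f →
      ∫ x, f (fun i =>
          ((P i).rnDeriv ((n : ℝ≥0∞)⁻¹ • ∑ j, P j) x).toReal) ∂((n : ℝ≥0∞)⁻¹ • ∑ j, P j) ≤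
        ∫ ω, f (fun i =>
          ((Q i).rnDeriv ((n : ℝ≥0∞)⁻¹ • ∑ j, Q j) ω).toReal) ∂((n : ℝ≥0∞)⁻¹ • ∑ j, Q j) := by
  obtain ⟨P', Q', hP'prob, hQ'prob, hacP, hacQ, hcmp⟩ := hex
  haveI := hP'prob
  haveI := hQ'prob
  haveI hPbarprob := avg_isProb n P hn
  haveI hQbarprob := avg_isProb n Q hn
  intro f hf
  have hcontf : Continuous f := by
    rw [← continuousOn_univ]
    exact hf.continuousOn isOpen_univ
  refine le_of_forall_pos_le_add ?_
  intro ε hε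
  obtain ⟨t, ht, ψ, b, hminor, happrox⟩ := exists_finite_affine_approx n hn hf hε
  set F : (Fin n → ℝ) → ℝ := fun z => t.sup' ht (fun j => ψ j z + b j) with hF
  have hFcont : Continuous F :=
    Continuous.finset_sup'_apply ht fun j _ => ((ψ j).continuous.add continuous_const)
  have hFlef : ∀ z, F z ≤ f z :=
    fun z => Finset.sup'_le ht _ fun j _ => hminor j z
  -- P side objects
  have hvP : Measurable (fun x => (fun i => ((P i).rnDeriv ((n : ℝ≥0∞)⁻¹ • ∑ j, P j) x).toReal)) :=
    measurable_pi_lambda _ fun i => (Measure.measurable_rnDeriv _ _).ennreal_toReal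
  have hvQ : Measurable (fun ω => (fun i => ((Q i).rnDeriv ((n : ℝ≥0∞)⁻¹ • ∑ j, Q j) ω).toReal)) :=
    measurable_pi_lambda _ fun i => (Measure.measurable_rnDeriv _ _).ennreal_toReal
  have hmemP : ∀ᵐ x ∂((n : ℝ≥0∞)⁻¹ • ∑ j, P j),
      (fun i => ((P i).rnDeriv ((n : ℝ≥0∞)⁻¹ • ∑ j, P j) x).toReal)
        ∈ {z : Fin n → ℝ | (∀ i, 0 ≤ z i) ∧ ∑ i, z i = (n : ℝ)} := by
    filter_upwards [ae_sum_eq n P hn P' hacP] with x hx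
    exact ⟨fun i => ENNReal.toReal_nonneg, hx⟩
  have hmemQ : ∀ᵐ ω ∂((n : ℝ≥0∞)⁻¹ • ∑ j, Q j),
      (fun i => ((Q i).rnDeriv ((n : ℝ≥0∞)⁻¹ • ∑ j, Q j) ω).toReal)
        ∈ {z : Fin n → ℝ | (∀ i, 0 ≤ z i) ∧ ∑ i, z i = (n : ℝ)} := by
    filter_upwards [ae_sum_eq n Q hn Q' hacQ] with ω hω
    exact ⟨fun i => ENNReal.toReal_nonneg, hω⟩
  have hintfP := integrable_comp_continuous _ hvP (isCompact_simplex n) hmemP hcontf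
  have hintFP := integrable_comp_continuous _ hvP (isCompact_simplex n) hmemP hFcont
  have hintfQ := integrable_comp_continuous _ hvQ (isCompact_simplex n) hmemQ hcontf
  have hintFQ := integrable_comp_continuous _ hvQ (isCompact_simplex n) hmemQ hFcont
  -- Step 1
  have step1 : ∫ x, f (fun i => ((P i).rnDeriv ((n : ℝ≥0∞)⁻¹ • ∑ j, P j) x).toReal)
        ∂((n : ℝ≥0∞)⁻¹ • ∑ j, P j)
      ≤ (∫ x, F (fun i => ((P i).rnDeriv ((n : ℝ≥0∞)⁻¹ • ∑ j, P j) x).toReal)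
        ∂((n : ℝ≥0∞)⁻¹ • ∑ j, P j)) + ε := by
    have h := integral_mono_ae hintfP (hintFP.add (integrable_const ε)) ?_
    · simp only [Pi.add_apply] at h
      rwa [integral_add hintFP (integrable_const ε), integral_const, probReal_univ,
        one_smul] at h
    · filter_upwards [hmemP] with x hx
      have := happrox _ hx
      simp only [Pi.add_apply]
      linarith
  -- Step 2 and 4 : transfer
  have step2 := transfer_eq n hn P P' hacP t ht ψ b
  have step4 := transfer_eq n hn Q Q' hacQ t ht ψ b
  -- Step 3 : apply the hypothesis to the homogenized function G
  set G : (Fin n → ℝ) → ℝ :=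
    fun z => t.sup' ht (fun j => ψ j z + b j * ((n : ℝ)⁻¹ * ∑ i, z i)) with hG
  have hGconv : ConvexOn ℝ Set.univ G :=
    convexOn_finset_sup' t ht _ (fun j _ => convexOn_linear_component n (ψ j) (b j))
  have step3 : ∫ x, G (fun i => ((P i).rnDeriv P' x).toReal) ∂P'
      ≤ ∫ ω, G (fun i => ((Q i).rnDeriv Q' ω).toReal) ∂Q' := by
    refine hcmp G hGconv ?_ ?_
    · exact integrable_G n P P' t ht ψ b
    · exact integrable_G n Q Q' t ht ψ b
  -- Step 5
  have step5 : ∫ ω, F (fun i => ((Q i).rnDeriv ((n : ℝ≥0∞)⁻¹ • ∑ j, Q j) ω).toReal)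
        ∂((n : ℝ≥0∞)⁻¹ • ∑ j, Q j)
      ≤ ∫ ω, f (fun i => ((Q i).rnDeriv ((n : ℝ≥0∞)⁻¹ • ∑ j, Q j) ω).toReal)
        ∂((n : ℝ≥0∞)⁻¹ • ∑ j, Q j) :=
    integral_mono hintFQ hintfQ fun ω => hFlef _
  have e2 : ∫ x, F (fun i => ((P i).rnDeriv ((n : ℝ≥0∞)⁻¹ • ∑ j, P j) x).toReal)
        ∂((n : ℝ≥0∞)⁻¹ • ∑ j, P j)
      = ∫ x, G (fun i => ((P i).rnDeriv P' x).toReal) ∂P' := step2.symm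
  have e4 : ∫ ω, G (fun i => ((Q i).rnDeriv Q' ω).toReal) ∂Q'
      = ∫ ω, F (fun i => ((Q i).rnDeriv ((n : ℝ≥0∞)⁻¹ • ∑ j, Q j) ω).toReal)
        ∂((n : ℝ≥0∞)⁻¹ • ∑ j, Q j) := step4
  calc ∫ x, f (fun i => ((P i).rnDeriv ((n : ℝ≥0∞)⁻¹ • ∑ j, P j) x).toReal)
        ∂((n : ℝ≥0∞)⁻¹ • ∑ j, P j)
      ≤ (∫ x, F (fun i => ((P i).rnDeriv ((n : ℝ≥0∞)⁻¹ • ∑ j, P j) x).toReal)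
        ∂((n : ℝ≥0∞)⁻¹ • ∑ j, P j)) + ε := step1
    _ = (∫ x, G (fun i => ((P i).rnDeriv P' x).toReal) ∂P') + ε := by rw [e2]
    _ ≤ (∫ ω, G (fun i => ((Q i).rnDeriv Q' ω).toReal) ∂Q') + ε := by linarith
    _ = (∫ ω, F (fun i => ((Q i).rnDeriv ((n : ℝ≥0∞)⁻¹ • ∑ j, Q j) ω).toReal)
        ∂((n : ℝ≥0∞)⁻¹ • ∑ j, Q j)) + ε := by rw [e4]
    _ ≤ _ := by linarith
end

section
/- Let $(P_1,\dots,P_n)$ and $(Q_1,\dots,Q_n)$ be tuples of probability measures. If $Q_1,\dots,Q_n$ are all identical and $(P_1,\dots,P_n)\prec_h(Q_1,\dots,Q_n)$, then $P_1,\dots,P_n$ are all identical. -/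
open MeasureTheory
open scoped ENNReal

/-- Proposition 3.6 (ii). If `Q₁,…,Qₙ` are all identical and
`(P₁,…,Pₙ) ≺ₕ (Q₁,…,Qₙ)` (heterogeneity order: for some dominating reference probability
measures `P'` and `Q'`, the vector of Radon–Nikodym derivatives of the `Pᵢ` is dominated in
multivariate convex order by that of the `Qᵢ`), then `P₁,…,Pₙ` are all identical. -/
theorem het_order_with_identical_implies_identical
    {Ω₁ Ω₂ : Type} [MeasurableSpace Ω₁] [MeasurableSpace Ω₂]
    (n : ℕ) (hn : 0 < n)
    (P : Fin n → Measure Ω₁) (Q : Fin n → Measure Ω₂)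
    [∀ i, IsProbabilityMeasure (P i)] [∀ i, IsProbabilityMeasure (Q i)]
    (hQ : ∀ i j, Q i = Q j)
    (hh : ∃ (P' : Measure Ω₁) (Q' : Measure Ω₂),
      IsProbabilityMeasure P' ∧ IsProbabilityMeasure Q' ∧
      (∀ i, P i ≪ P') ∧ (∀ i, Q i ≪ Q') ∧
      ∀ f : (Fin n → ℝ) → ℝ, ConvexOn ℝ Set.univ f →
        Integrable (fun x => f (fun i => ((P i).rnDeriv P' x).toReal)) P' →
        Integrable (fun ω => f (fun i => ((Q i).rnDeriv Q' ω).toReal)) Q' →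
        ∫ x, f (fun i => ((P i).rnDeriv P' x).toReal) ∂P' ≤
          ∫ ω, f (fun i => ((Q i).rnDeriv Q' ω).toReal) ∂Q') :
    ∀ i j, P i = P j := by
  obtain ⟨P', Q', hP'prob, hQ'prob, hPac, hQac, hconv⟩ := hh
  intro i j
  -- the convex test function
  set f : (Fin n → ℝ) → ℝ := fun x => |x i - x j| with hf
  have hfconv : ConvexOn ℝ Set.univ f := by
    have h1 : ConvexOn ℝ Set.univ (abs : ℝ → ℝ) := by
      have h := (convexOn_univ_norm : ConvexOn ℝ Set.univ (norm : ℝ → ℝ))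
      have hn : (norm : ℝ → ℝ) = abs := funext Real.norm_eq_abs
      rw [hn] at h
      exact h
    have hL : IsLinearMap ℝ (fun x : Fin n → ℝ => x i - x j) := by
      constructor
      · intro a b; simp; ring
      · intro c a; simp; ring
    have := h1.comp_linearMap (hL.mk' _)
    simpa [Function.comp_def] using this
  have hPint : ∀ k : Fin n,
      Integrable (fun x => ((P k).rnDeriv P' x).toReal) P' :=
    fun k => Measure.integrable_toReal_rnDeriv
  have hLint : Integrable (fun x => f (fun k => ((P k).rnDeriv P' x).toReal)) P' := by
    simpa [hf] using ((hPint i).sub (hPint j)).abs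
  have hRint : Integrable (fun ω => f (fun k => ((Q k).rnDeriv Q' ω).toReal)) Q' := by
    have hQint : ∀ k : Fin n,
        Integrable (fun ω => ((Q k).rnDeriv Q' ω).toReal) Q' :=
      fun k => Measure.integrable_toReal_rnDeriv
    simpa [hf] using ((hQint i).sub (hQint j)).abs
  have hRzero : ∫ ω, f (fun k => ((Q k).rnDeriv Q' ω).toReal) ∂Q' = 0 := by
    have : ∀ ω, f (fun k => ((Q k).rnDeriv Q' ω).toReal) = 0 := by
      intro ω; simp [hf, hQ i j]
    simp [this]
  have hle := hconv f hfconv hLint hRint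
  rw [hRzero] at hle
  have hnonneg : 0 ≤ᵐ[P'] fun x => f (fun k => ((P k).rnDeriv P' x).toReal) := by
    filter_upwards with x
    simp [hf, abs_nonneg]
  have hzero : ∫ x, f (fun k => ((P k).rnDeriv P' x).toReal) ∂P' = 0 :=
    le_antisymm hle (integral_nonneg_of_ae hnonneg)
  have hae : (fun x => f (fun k => ((P k).rnDeriv P' x).toReal)) =ᵐ[P'] 0 :=
    (integral_eq_zero_iff_of_nonneg_ae hnonneg hLint).mp hzero
  have haeEq : (P i).rnDeriv P' =ᵐ[P'] (P j).rnDeriv P' := by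
    filter_upwards [hae, (P i).rnDeriv_lt_top P', (P j).rnDeriv_lt_top P'] with x h hi hj
    have hre : ((P i).rnDeriv P' x).toReal = ((P j).rnDeriv P' x).toReal := by
      have := h
      simp only [hf, Pi.zero_apply, abs_eq_zero, sub_eq_zero] at this
      exact this
    exact (ENNReal.toReal_eq_toReal_iff' hi.ne hj.ne).mp hre
  calc P i = P'.withDensity ((P i).rnDeriv P') := (Measure.withDensity_rnDeriv_eq _ _ (hPac i)).symm
    _ = P'.withDensity ((P j).rnDeriv P') := withDensity_congr_ae haeEq
    _ = P j := Measure.withDensity_rnDeriv_eq _ _ (hPac j)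
end

section
/- Let $(P_1,\dots,P_n)$ and $(Q_1,\dots,Q_n)$ be tuples of probability measures on two measurable spaces. If $Q_1,\dots,Q_n$ are mutually singular, then $(P_1,\dots,P_n)\prec_h(Q_1,\dots,Q_n)$; that is, with $P=\frac1n\sum P_i$ and $Q=\frac1n\sum Q_i$, for every convex $f:\mathbb{R}^n\to\mathbb{R}$ one has $\int f(\frac{dP_1}{dP},\dots,\frac{dP_n}{dP})\,dP \le \int f(\frac{dQ_1}{dQ},\dots,\frac{dQ_n}{dQ})\,dQ$. -/
open MeasureTheory
open scoped ENNReal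

namespace MutSingHetAux

variable {Ω : Type} [MeasurableSpace Ω]

lemma bar_isProb (n : ℕ) (hn : 0 < n) (P : Fin n → Measure Ω)
    [∀ i, IsProbabilityMeasure (P i)] :
    IsProbabilityMeasure ((n : ℝ≥0∞)⁻¹ • ∑ j, P j) := by
  constructor
  simp only [Measure.smul_apply, Measure.coe_finset_sum, Finset.sum_apply, measure_univ,
    smul_eq_mul, Finset.sum_const, Finset.card_univ, Fintype.card_fin, nsmul_eq_mul, mul_one]
  exact ENNReal.inv_mul_cancel (by exact_mod_cast hn.ne') (ENNReal.natCast_ne_top n)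

lemma bar_ac (n : ℕ) (P : Fin n → Measure Ω) (i : Fin n) :
    P i ≪ (n : ℝ≥0∞)⁻¹ • ∑ j, P j := by
  have h1 : P i ≪ ∑ j, P j := by
    refine Measure.AbsolutelyContinuous.mk fun s _ hs => ?_
    simp only [Measure.coe_finset_sum, Finset.sum_apply] at hs
    exact (Finset.sum_eq_zero_iff.mp hs) i (Finset.mem_univ i)
  exact h1.trans (Measure.absolutelyContinuous_smul
    (ENNReal.inv_ne_zero.mpr (ENNReal.natCast_ne_top n)))

lemma rnDeriv_finsum {ι : Type*} (s : Finset ι) (ν : ι → Measure Ω) (μ : Measure Ω)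
    [∀ i, IsFiniteMeasure (ν i)] [SigmaFinite μ] :
    (∑ i ∈ s, ν i).rnDeriv μ =ᵐ[μ] ∑ i ∈ s, (ν i).rnDeriv μ := by
  classical
  induction s using Finset.induction with
  | empty => simp [Measure.rnDeriv_zero]
  | @insert a s' h ih =>
      rw [Finset.sum_insert h, Finset.sum_insert h]
      haveI : IsFiniteMeasure (∑ i ∈ s', ν i) := by
        constructor
        simp only [Measure.coe_finset_sum, Finset.sum_apply]
        exact ENNReal.sum_lt_top.mpr fun i _ => measure_lt_top _ _
      exact (Measure.rnDeriv_add _ _ _).trans ((Filter.EventuallyEq.refl _ _).add ih)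

lemma sum_rnDeriv_ae (n : ℕ) (hn : 0 < n) (P : Fin n → Measure Ω)
    [∀ i, IsProbabilityMeasure (P i)] :
    ∀ᵐ x ∂((n : ℝ≥0∞)⁻¹ • ∑ j, P j),
      (∑ i, ((P i).rnDeriv ((n : ℝ≥0∞)⁻¹ • ∑ j, P j) x).toReal = n ∧
      ∀ i, ((P i).rnDeriv ((n : ℝ≥0∞)⁻¹ • ∑ j, P j) x).toReal ≤ n) := by
  set μ := (n : ℝ≥0∞)⁻¹ • ∑ j, P j with hμ
  have hn0 : (n : ℝ≥0∞) ≠ 0 := by exact_mod_cast hn.ne'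
  have hEq : ∑ j, P j = (n : ℝ≥0∞) • μ := by
    rw [hμ, smul_smul, ENNReal.mul_inv_cancel hn0 (ENNReal.natCast_ne_top n), one_smul]
  haveI : IsFiniteMeasure (∑ j, P j) := by
    constructor
    simp only [Measure.coe_finset_sum, Finset.sum_apply]
    exact ENNReal.sum_lt_top.mpr fun i _ => measure_lt_top _ _
  haveI : IsFiniteMeasure μ := by
    constructor
    rw [hμ, Measure.smul_apply, smul_eq_mul]
    exact ENNReal.mul_lt_top (by simp [hn]) (measure_lt_top _ _)
  have h1 : (∑ j, P j).rnDeriv μ =ᵐ[μ] ∑ j, (P j).rnDeriv μ := rnDeriv_finsum _ _ _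
  have h2 : (∑ j, P j).rnDeriv μ =ᵐ[μ] fun _ => (n : ℝ≥0∞) := by
    rw [hEq]
    refine (Measure.rnDeriv_smul_left_of_ne_top μ μ (ENNReal.natCast_ne_top n)).trans ?_
    filter_upwards [Measure.rnDeriv_self μ] with x hx
    simp [hx]
  have hlt : ∀ᵐ x ∂μ, ∀ i, (P i).rnDeriv μ x < ∞ :=
    ae_all_iff.mpr fun i => Measure.rnDeriv_lt_top _ _
  filter_upwards [h1.symm.trans h2, hlt] with x hx hxlt
  have hsum : ∑ i, (P i).rnDeriv μ x = (n : ℝ≥0∞) := by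
    have := hx
    simpa [Finset.sum_apply] using this
  have htr : ∑ i, ((P i).rnDeriv μ x).toReal = (n : ℝ) := by
    rw [← ENNReal.toReal_sum (fun i _ => (hxlt i).ne), hsum]
    simp
  refine ⟨htr, fun i => ?_⟩
  rw [← htr]
  exact Finset.single_le_sum (f := fun i => ((P i).rnDeriv μ x).toReal)
    (fun j _ => ENNReal.toReal_nonneg) (Finset.mem_univ i)

lemma integral_rnDeriv_one (n : ℕ) (hn : 0 < n) (P : Fin n → Measure Ω)
    [∀ i, IsProbabilityMeasure (P i)] (i : Fin n) :
    ∫ x, ((P i).rnDeriv ((n : ℝ≥0∞)⁻¹ • ∑ j, P j) x).toReal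
      ∂((n : ℝ≥0∞)⁻¹ • ∑ j, P j) = 1 := by
  haveI := bar_isProb n hn P
  rw [Measure.integral_toReal_rnDeriv (bar_ac n P i), measureReal_def, measure_univ, ENNReal.toReal_one]

lemma integrable_rnDeriv (n : ℕ) (hn : 0 < n) (P : Fin n → Measure Ω)
    [∀ i, IsProbabilityMeasure (P i)] (i : Fin n) :
    Integrable (fun x => ((P i).rnDeriv ((n : ℝ≥0∞)⁻¹ • ∑ j, P j) x).toReal)
      ((n : ℝ≥0∞)⁻¹ • ∑ j, P j) := by
  haveI := bar_isProb n hn P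
  refine Integrable.mono' (integrable_const (n : ℝ))
    ((Measure.measurable_rnDeriv _ _).ennreal_toReal.aestronglyMeasurable) ?_
  filter_upwards [sum_rnDeriv_ae n hn P] with x hx
  rw [Real.norm_eq_abs, abs_of_nonneg ENNReal.toReal_nonneg]
  exact hx.2 i

/-- vertex `n·e_k` -/
def v (n : ℕ) (k : Fin n) : Fin n → ℝ := fun j => if j = k then (n : ℝ) else 0

lemma pt_le (n : ℕ) (hn : 0 < n) {f : (Fin n → ℝ) → ℝ} (hf : ConvexOn ℝ Set.univ f)
    (s : Fin n → ℝ) (h0 : ∀ i, 0 ≤ s i) (hs : ∑ i, s i = n) :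
    f s ≤ ∑ i, (s i / n) * f (v n i) := by
  have hnR : (n : ℝ) ≠ 0 := by exact_mod_cast hn.ne'
  have hw : ∑ i, s i / n = 1 := by rw [← Finset.sum_div, hs, div_self hnR]
  have hrepr : s = ∑ i, (s i / n) • v n i := by
    funext j
    simp only [Finset.sum_apply, Pi.smul_apply, v, smul_eq_mul, mul_ite, mul_zero]
    rw [Finset.sum_ite_eq Finset.univ j]
    simp [div_mul_cancel₀ _ hnR]
  calc f s = f (∑ i, (s i / n) • v n i) := by rw [← hrepr]
    _ ≤ ∑ i, (s i / n) * f (v n i) :=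
        hf.map_sum_le (fun i _ => div_nonneg (h0 i) (Nat.cast_nonneg n)) hw
          (fun i _ => Set.mem_univ _)

lemma pt_eq (n : ℕ) (hn : 0 < n) (f : (Fin n → ℝ) → ℝ) (k : Fin n) :
    f (v n k) = ∑ i, (v n k i / n) * f (v n i) := by
  have hnR : (n : ℝ) ≠ 0 := by exact_mod_cast hn.ne'
  have h : ∀ i, (v n k i / n) * f (v n i) = if i = k then f (v n i) else 0 := by
    intro i
    by_cases h : i = k <;> simp [v, h, div_self hnR]
  simp only [h]
  rw [Finset.sum_ite_eq' Finset.univ k]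
  simp

lemma le_bound (n : ℕ) (hn : 0 < n) (P : Fin n → Measure Ω)
    [∀ i, IsProbabilityMeasure (P i)] {f : (Fin n → ℝ) → ℝ} (hf : ConvexOn ℝ Set.univ f) :
    ∫ x, f (fun i => ((P i).rnDeriv ((n : ℝ≥0∞)⁻¹ • ∑ j, P j) x).toReal)
      ∂((n : ℝ≥0∞)⁻¹ • ∑ j, P j) ≤ ∑ i, f (v n i) / n := by
  set μ := (n : ℝ≥0∞)⁻¹ • ∑ j, P j with hμ
  haveI := bar_isProb n hn P
  set X : Ω → Fin n → ℝ := fun x i => ((P i).rnDeriv μ x).toReal with hX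
  have hXmeas : Measurable X :=
    measurable_pi_lambda _ fun i => (Measure.measurable_rnDeriv _ _).ennreal_toReal
  have hfc : Continuous f := by
    rw [← continuousOn_univ]
    exact hf.continuousOn isOpen_univ
  obtain ⟨C, hC⟩ := (isCompact_closedBall (0 : Fin n → ℝ) n).exists_bound_of_continuousOn
    hfc.continuousOn
  have hae := sum_rnDeriv_ae n hn P
  have hball : ∀ᵐ x ∂μ, X x ∈ Metric.closedBall (0 : Fin n → ℝ) n := by
    filter_upwards [hae] with x hx
    rw [Metric.mem_closedBall, dist_zero_right]
    refine (pi_norm_le_iff_of_nonneg (Nat.cast_nonneg n)).mpr fun i => ?_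
    rw [Real.norm_eq_abs, abs_of_nonneg ENNReal.toReal_nonneg]
    exact hx.2 i
  have hintX : ∀ i, Integrable (fun x => X x i) μ := fun i => integrable_rnDeriv n hn P i
  have hre : ∀ i, (fun x => (X x i / n) * f (v n i)) = fun x => (f (v n i) / n) * X x i := by
    intro i; funext x; ring
  have hint1 : Integrable (fun x => f (X x)) μ := by
    refine Integrable.mono' (integrable_const C)
      ((hfc.measurable.comp hXmeas).aestronglyMeasurable) ?_
    filter_upwards [hball] with x hx using hC _ hx
  have hint2 : ∀ i, Integrable (fun x => (X x i / n) * f (v n i)) μ := by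
    intro i; rw [hre i]; exact (hintX i).const_mul _
  have hle : ∫ x, f (X x) ∂μ ≤ ∫ x, ∑ i, (X x i / n) * f (v n i) ∂μ := by
    refine integral_mono_ae hint1 (integrable_finset_sum _ fun i _ => hint2 i) ?_
    filter_upwards [hae] with x hx
    exact pt_le n hn hf (X x) (fun i => ENNReal.toReal_nonneg) hx.1
  refine hle.trans_eq ?_
  rw [integral_finset_sum _ (fun i _ => hint2 i)]
  refine Finset.sum_congr rfl fun i _ => ?_
  rw [hre i, integral_const_mul, integral_rnDeriv_one n hn P i, mul_one]

lemma eq_bound (n : ℕ) (hn : 0 < n) (Q : Fin n → Measure Ω)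
    [∀ i, IsProbabilityMeasure (Q i)] (hsing : Pairwise fun i j => Q i ⟂ₘ Q j)
    (f : (Fin n → ℝ) → ℝ) :
    ∫ x, f (fun i => ((Q i).rnDeriv ((n : ℝ≥0∞)⁻¹ • ∑ j, Q j) x).toReal)
      ∂((n : ℝ≥0∞)⁻¹ • ∑ j, Q j) = ∑ i, f (v n i) / n := by
  classical
  set μ := (n : ℝ≥0∞)⁻¹ • ∑ j, Q j with hμ
  haveI := bar_isProb n hn Q
  set Y : Ω → Fin n → ℝ := fun x i => ((Q i).rnDeriv μ x).toReal with hY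
  have hA : ∀ k : Fin n, ∃ A : Set Ω, MeasurableSet A ∧ Q k A = 1 ∧
      ∀ j, j ≠ k → Q j A = 0 := by
    intro k
    refine ⟨⋂ j, if h : j = k then Set.univ else (hsing h).nullSet, ?_, ?_, ?_⟩
    · refine MeasurableSet.iInter fun j => ?_
      by_cases h : j = k
      · simp [h]
      · simpa [h] using (hsing h).measurableSet_nullSet
    · have hc : Q k (⋂ j, if h : j = k then Set.univ else (hsing h).nullSet)ᶜ = 0 := by
        rw [Set.compl_iInter]
        refine measure_iUnion_null fun j => ?_
        by_cases h : j = k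
        · simp [h]
        · simpa [h] using (hsing h).measure_compl_nullSet
      have hm : MeasurableSet (⋂ j, if h : j = k then Set.univ else (hsing h).nullSet) := by
        refine MeasurableSet.iInter fun j => ?_
        by_cases h : j = k
        · simp [h]
        · simpa [h] using (hsing h).measurableSet_nullSet
      exact (prob_compl_eq_zero_iff hm).mp hc
    · intro j hj
      refine measure_mono_null (Set.iInter_subset _ j) ?_
      simpa [hj] using (hsing hj).measure_nullSet
  choose A hAmeas hAone hAzero using hA
  have hcover : ∀ᵐ x ∂μ, x ∈ ⋃ k, A k := by
    have hz : ∀ j, Q j ((⋃ k, A k)ᶜ) = 0 := by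
      intro j
      refine measure_mono_null (Set.compl_subset_compl.mpr (Set.subset_iUnion A j)) ?_
      exact (prob_compl_eq_zero_iff (hAmeas j)).mpr (hAone j)
    have hsum0 : (∑ j, Q j) ((⋃ k, A k)ᶜ) = 0 := by
      simp only [Measure.coe_finset_sum, Finset.sum_apply]
      exact Finset.sum_eq_zero fun j _ => hz j
    have h0 : μ ((⋃ k, A k)ᶜ) = 0 := by
      rw [hμ, Measure.smul_apply, hsum0, smul_eq_mul, mul_zero]
    exact ae_iff.mpr h0
  have hvert : ∀ k : Fin n, ∀ᵐ x ∂μ, x ∈ A k → Y x = v n k := by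
    intro k
    have hz : ∀ j, j ≠ k → ∀ᵐ x ∂μ, x ∈ A k → (Q j).rnDeriv μ x = 0 := by
      intro j hj
      have hint : ∫⁻ x in A k, (Q j).rnDeriv μ x ∂μ = 0 := by
        rw [Measure.setLIntegral_rnDeriv (bar_ac n Q j) (A k)]
        exact hAzero k j hj
      have h0 := (lintegral_eq_zero_iff (Measure.measurable_rnDeriv _ _)).mp hint
      exact (ae_restrict_iff' (hAmeas k)).mp h0
    have hz' : ∀ᵐ x ∂μ, ∀ j, j ≠ k → (x ∈ A k → (Q j).rnDeriv μ x = 0) := by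
      refine ae_all_iff.mpr fun j => ?_
      by_cases h : j = k
      · exact Filter.Eventually.of_forall fun x hjk => absurd h hjk
      · filter_upwards [hz j h] with x hx using fun _ => hx
    filter_upwards [hz', sum_rnDeriv_ae n hn Q] with x hx hsumx hk
    have hz0 : ∀ j, j ≠ k → Y x j = 0 := by
      intro j hj
      simp only [hY]
      rw [hx j hj hk]
      simp
    have hsumY : ∑ i, Y x i = (n : ℝ) := hsumx.1
    have hYk : Y x k = (n : ℝ) := by
      rw [← hsumY, Finset.sum_eq_single k (fun j _ hj => hz0 j hj) (by simp)]
    funext i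
    by_cases h : i = k
    · rw [h, hYk]; simp [v]
    · rw [hz0 i h]; simp [v, h]
  have hall : ∀ᵐ x ∂μ, ∀ k, x ∈ A k → Y x = v n k := ae_all_iff.mpr hvert
  have hfeq : ∀ᵐ x ∂μ, f (Y x) = ∑ i, (Y x i / n) * f (v n i) := by
    filter_upwards [hcover, hall] with x hxc hxa
    obtain ⟨k, hk⟩ := Set.mem_iUnion.mp hxc
    rw [hxa k hk, ← pt_eq n hn f k]
  have hintY : ∀ i, Integrable (fun x => Y x i) μ := fun i => integrable_rnDeriv n hn Q i
  have hre : ∀ i, (fun x => (Y x i / n) * f (v n i)) = fun x => (f (v n i) / n) * Y x i := by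
    intro i; funext x; ring
  have hint2 : ∀ i, Integrable (fun x => (Y x i / n) * f (v n i)) μ := by
    intro i; rw [hre i]; exact (hintY i).const_mul _
  calc ∫ x, f (Y x) ∂μ = ∫ x, ∑ i, (Y x i / n) * f (v n i) ∂μ := integral_congr_ae hfeq
    _ = ∑ i, ∫ x, (Y x i / n) * f (v n i) ∂μ := integral_finset_sum _ fun i _ => hint2 i
    _ = ∑ i, f (v n i) / n := by
        refine Finset.sum_congr rfl fun i _ => ?_
        rw [hre i, integral_const_mul, integral_rnDeriv_one n hn Q i, mul_one]

end MutSingHetAux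

/-- Proposition 3.6 (iv). If `Q₁,…,Qₙ` are mutually singular, then
`(P₁,…,Pₙ) ≺ₕ (Q₁,…,Qₙ)`: with `P = (1/n)∑ Pᵢ` and `Q = (1/n)∑ Qᵢ`, for every convex
`f : ℝⁿ → ℝ` one has `∫ f(dP₁/dP,…,dPₙ/dP) dP ≤ ∫ f(dQ₁/dQ,…,dQₙ/dQ) dQ`. -/
theorem mutually_singular_dominates_in_heterogeneity
    {Ω₁ Ω₂ : Type} [MeasurableSpace Ω₁] [MeasurableSpace Ω₂]
    (n : ℕ) (hn : 0 < n)
    (P : Fin n → Measure Ω₁) (Q : Fin n → Measure Ω₂)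
    [∀ i, IsProbabilityMeasure (P i)] [∀ i, IsProbabilityMeasure (Q i)]
    (hsing : Pairwise fun i j => Q i ⟂ₘ Q j) :
    ∀ f : (Fin n → ℝ) → ℝ, ConvexOn ℝ Set.univ f →
      ∫ x, f (fun i =>
          ((P i).rnDeriv ((n : ℝ≥0∞)⁻¹ • ∑ j, P j) x).toReal) ∂((n : ℝ≥0∞)⁻¹ • ∑ j, P j) ≤
        ∫ ω, f (fun i =>
          ((Q i).rnDeriv ((n : ℝ≥0∞)⁻¹ • ∑ j, Q j) ω).toReal) ∂((n : ℝ≥0∞)⁻¹ • ∑ j, Q j) := by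
  intro f hf
  calc ∫ x, f (fun i =>
          ((P i).rnDeriv ((n : ℝ≥0∞)⁻¹ • ∑ j, P j) x).toReal) ∂((n : ℝ≥0∞)⁻¹ • ∑ j, P j)
      ≤ ∑ i, f (MutSingHetAux.v n i) / n := MutSingHetAux.le_bound n hn P hf
    _ = ∫ ω, f (fun i =>
          ((Q i).rnDeriv ((n : ℝ≥0∞)⁻¹ • ∑ j, Q j) ω).toReal) ∂((n : ℝ≥0∞)⁻¹ • ∑ j, Q j) :=
        (MutSingHetAux.eq_bound n hn Q hsing f).symm
end

section
/- Let $(Q_1,\dots,Q_n)$ be probability measures on $(\Omega,\mathcal A)$. If there exists a probability measure $Q'$ dominating $(Q_1,\dots,Q_n)$ and a random variable $X$ with continuous (atomless) distribution under $Q'$ that is independent of $(\frac{dQ_1}{dQ'},\dots,\frac{dQ_n}{dQ'})$ under $Q'$, then for $Q=\frac1n\sum_{i=1}^n Q_i$ the same $X$ is a continuously distributed random variable independent of $(\frac{dQ_1}{dQ},\dots,\frac{dQ_n}{dQ})$ under $Q$. -/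
open MeasureTheory ProbabilityTheory
open scoped ENNReal

/-- Proposition 3.12, (i) ⇒ (ii). If `(Q₁,…,Qₙ)` is conditionally atomless,
i.e. there is a dominating probability measure `Q'` and a random variable `X` with atomless
distribution under `Q'` that is independent of `(dQ₁/dQ',…,dQₙ/dQ')` under `Q'`, then for the
average `Q = (1/n)∑ᵢ Qᵢ` the same `X` has an atomless distribution under `Q` and is independent
of `(dQ₁/dQ,…,dQₙ/dQ)` under `Q`. -/
theorem conditionally_atomless_average
    {Ω : Type} [MeasurableSpace Ω] (n : ℕ) (hn : 0 < n)
    (Qi : Fin n → Measure Ω) [∀ i, IsProbabilityMeasure (Qi i)]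
    (Q' : Measure Ω) [IsProbabilityMeasure Q'] (hdom : ∀ i, Qi i ≪ Q')
    (X : Ω → ℝ) (hX : Measurable X)
    (hcont : ∀ x : ℝ, Q'.map X {x} = 0)
    (hind : IndepFun X (fun ω => fun i => ((Qi i).rnDeriv Q' ω).toReal) Q') :
    (∀ x : ℝ, (((n : ℝ≥0∞)⁻¹ • ∑ j, Qi j).map X) {x} = 0) ∧
      IndepFun X
        (fun ω => fun i => ((Qi i).rnDeriv ((n : ℝ≥0∞)⁻¹ • ∑ j, Qi j) ω).toReal)
        ((n : ℝ≥0∞)⁻¹ • ∑ j, Qi j) := by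
  set Y : Ω → (Fin n → ℝ) := fun ω => fun i => ((Qi i).rnDeriv Q' ω).toReal with hYdef
  set Q : Measure Ω := (n : ℝ≥0∞)⁻¹ • ∑ j, Qi j with hQdef
  have hn0 : (n : ℝ≥0∞) ≠ 0 := by exact_mod_cast hn.ne'
  have hntop : (n : ℝ≥0∞) ≠ ∞ := ENNReal.natCast_ne_top n
  have hYm : Measurable Y := measurable_pi_lambda _ fun i =>
    (Measure.measurable_rnDeriv (Qi i) Q').ennreal_toReal
  set φ : (Fin n → ℝ) → ℝ≥0∞ := fun y => ENNReal.ofReal ((n : ℝ)⁻¹ * ∑ j, y j) with hφdef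
  have hφm : Measurable φ := ENNReal.measurable_ofReal.comp
    (measurable_const.mul (Finset.measurable_sum _ fun i _ => measurable_pi_apply i))
  have hfin : ∀ᵐ ω ∂Q', ∀ i, (Qi i).rnDeriv Q' ω ≠ ∞ :=
    ae_all_iff.2 fun i => Measure.rnDeriv_ne_top _ _
  have hnRpos : (0 : ℝ) < (n : ℝ)⁻¹ := by positivity
  -- the density of Q w.r.t. Q' is φ ∘ Y, a.e.
  have hae : (fun ω => φ (Y ω)) =ᵐ[Q']
      fun ω => (n : ℝ≥0∞)⁻¹ * ∑ j, (Qi j).rnDeriv Q' ω := by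
    filter_upwards [hfin] with ω hω
    have h1 : ∀ j : Fin n, ENNReal.ofReal (((Qi j).rnDeriv Q' ω).toReal)
        = (Qi j).rnDeriv Q' ω := fun j => ENNReal.ofReal_toReal (hω j)
    simp only [hφdef, hYdef]
    rw [ENNReal.ofReal_mul hnRpos.le, ENNReal.ofReal_sum_of_nonneg
      (fun j _ => ENNReal.toReal_nonneg), ENNReal.ofReal_inv_of_pos (by positivity),
      ENNReal.ofReal_natCast]
    exact congrArg _ (Finset.sum_congr rfl fun j _ => h1 j)
  have hQeq : Q = Q'.withDensity fun ω => φ (Y ω) := by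
    rw [withDensity_congr_ae hae]
    ext s hs
    rw [withDensity_apply _ hs, hQdef, Measure.smul_apply, Measure.finset_sum_apply,
      smul_eq_mul, lintegral_const_mul _ (by
        exact Finset.measurable_sum _ fun j _ => Measure.measurable_rnDeriv _ _),
      lintegral_finset_sum _ fun j _ => Measure.measurable_rnDeriv _ _]
    congr 1
    exact Finset.sum_congr rfl fun j _ => (Measure.setLIntegral_rnDeriv (hdom j) s).symm
  have hQac : Q ≪ Q' := hQeq ▸ withDensity_absolutelyContinuous _ _
  haveI : IsProbabilityMeasure Q := ⟨by
    simp only [hQdef, Measure.smul_apply, Measure.finset_sum_apply, measure_univ,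
      Finset.sum_const, Finset.card_univ, Fintype.card_fin, nsmul_eq_mul, mul_one, smul_eq_mul]
    exact ENNReal.inv_mul_cancel hn0 hntop⟩
  have key : ∀ s, MeasurableSet s → Q s = ∫⁻ ω in s, φ (Y ω) ∂Q' := fun s hs => by
    rw [hQeq, withDensity_apply _ hs]
  -- the product formula
  have hprod : ∀ A B, MeasurableSet A → MeasurableSet B →
      Q (X ⁻¹' A ∩ Y ⁻¹' B) = Q' (X ⁻¹' A) * Q (Y ⁻¹' B) := by
    intro A B hA hB
    set u : ℝ → ℝ≥0∞ := A.indicator fun _ => 1 with hu_def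
    set v : (Fin n → ℝ) → ℝ≥0∞ := fun y => B.indicator (fun _ => (1 : ℝ≥0∞)) y * φ y
      with hv_def
    have hu : Measurable u := measurable_const.indicator hA
    have hv : Measurable v := (measurable_const.indicator hB).mul hφm
    have h1 : ∀ ω, (X ⁻¹' A ∩ Y ⁻¹' B).indicator (fun ω => φ (Y ω)) ω
        = u (X ω) * v (Y ω) := by
      intro ω
      by_cases hx : X ω ∈ A <;> by_cases hy : Y ω ∈ B <;>
        simp [hu_def, hv_def, Set.indicator, hx, hy]
    calc Q (X ⁻¹' A ∩ Y ⁻¹' B) = ∫⁻ ω in X ⁻¹' A ∩ Y ⁻¹' B, φ (Y ω) ∂Q' :=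
          key _ ((hX hA).inter (hYm hB))
      _ = ∫⁻ ω, (X ⁻¹' A ∩ Y ⁻¹' B).indicator (fun ω => φ (Y ω)) ω ∂Q' :=
          (lintegral_indicator ((hX hA).inter (hYm hB)) _).symm
      _ = ∫⁻ ω, ((u ∘ X) * (v ∘ Y)) ω ∂Q' := lintegral_congr h1
      _ = (∫⁻ ω, u (X ω) ∂Q') * ∫⁻ ω, v (Y ω) ∂Q' :=
          lintegral_mul_eq_lintegral_mul_lintegral_of_indepFun (hu.comp hX) (hv.comp hYm)
            (hind.comp hu hv)
      _ = Q' (X ⁻¹' A) * Q (Y ⁻¹' B) := by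
          congr 1
          · rw [← lintegral_indicator_one (hX hA)]
            refine lintegral_congr fun ω => ?_
            by_cases hx : X ω ∈ A <;> simp [hu_def, Set.indicator, hx]
          · rw [key _ (hYm hB), ← lintegral_indicator (hYm hB)]
            refine lintegral_congr fun ω => ?_
            by_cases hy : Y ω ∈ B <;> simp [hv_def, Set.indicator, hy]
  have hQX : ∀ A, MeasurableSet A → Q (X ⁻¹' A) = Q' (X ⁻¹' A) := by
    intro A hA
    have := hprod A Set.univ hA MeasurableSet.univ
    simpa [measure_univ] using this
  have hindQ : IndepFun X Y Q := by
    rw [indepFun_iff_measure_inter_preimage_eq_mul]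
    intro A B hA hB
    rw [hprod A B hA hB, hQX A hA]
  constructor
  · intro x
    rw [Measure.map_apply hX (measurableSet_singleton x),
      hQX _ (measurableSet_singleton x),
      ← Measure.map_apply hX (measurableSet_singleton x)]
    exact hcont x
  · -- the Q-densities are a.e. a measurable function of Y
    set h : (Fin n → ℝ) → (Fin n → ℝ) := fun y i => y i / ((n : ℝ)⁻¹ * ∑ j, y j) with hh_def
    have hhm : Measurable h := measurable_pi_lambda _ fun i =>
      (measurable_pi_apply i).div
        (measurable_const.mul (Finset.measurable_sum _ fun j _ => measurable_pi_apply j))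
    have hdomQ : ∀ i, Qi i ≪ Q := by
      intro i s hs
      rw [hQdef, Measure.smul_apply, smul_eq_mul] at hs
      rcases mul_eq_zero.1 hs with h0 | h0
      · exact absurd h0 (ENNReal.inv_ne_zero.2 hntop)
      · rw [Measure.finset_sum_apply] at h0
        exact (Finset.sum_eq_zero_iff.1 h0) i (Finset.mem_univ i)
    have hQd : Q.rnDeriv Q' =ᵐ[Q'] fun ω => φ (Y ω) := by
      rw [hQeq]; exact Measure.rnDeriv_withDensity Q' (hφm.comp hYm)
    have hmul : ∀ᵐ ω ∂Q', ∀ i,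
        (Qi i).rnDeriv Q ω * Q.rnDeriv Q' ω = (Qi i).rnDeriv Q' ω :=
      ae_all_iff.2 fun i => Measure.rnDeriv_mul_rnDeriv (hdomQ i)
    have hφpos : ∀ᵐ ω ∂Q, φ (Y ω) ≠ 0 := by
      have hsm : MeasurableSet {ω | φ (Y ω) = 0} :=
        (hφm.comp hYm) (measurableSet_singleton 0)
      have : Q {ω | φ (Y ω) = 0} = 0 := by
        rw [key _ hsm, setLIntegral_congr_fun hsm
          (fun ω (hω : φ (Y ω) = 0) => hω), lintegral_zero]
      rw [ae_iff]
      simpa only [not_not] using this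
    have hZ : h ∘ Y =ᵐ[Q]
        fun ω => fun i => ((Qi i).rnDeriv Q ω).toReal := by
      filter_upwards [hQac.ae_le hmul, hQac.ae_le hQd, hQac.ae_le hfin, hφpos]
        with ω hω1 hω2 hω3 hω4
      funext i
      have hc0 : φ (Y ω) ≠ 0 := hω4
      have hctop : φ (Y ω) ≠ ∞ := ENNReal.ofReal_ne_top
      have hgi : (Qi i).rnDeriv Q ω = (Qi i).rnDeriv Q' ω / φ (Y ω) :=
        (ENNReal.eq_div_iff hc0 hctop).2 (by rw [mul_comm, ← hω2]; exact hω1 i)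
      have hsum_nonneg : (0 : ℝ) ≤ (n : ℝ)⁻¹ * ∑ j, Y ω j := by
        have : ∀ j ∈ Finset.univ, (0 : ℝ) ≤ Y ω j := fun j _ => ENNReal.toReal_nonneg
        positivity
      calc (h ∘ Y) ω i = Y ω i / ((n : ℝ)⁻¹ * ∑ j, Y ω j) := rfl
        _ = ((Qi i).rnDeriv Q' ω).toReal / (φ (Y ω)).toReal := by
            simp only [hφdef, ENNReal.toReal_ofReal hsum_nonneg]; rfl
        _ = ((Qi i).rnDeriv Q' ω / φ (Y ω)).toReal := (ENNReal.toReal_div _ _).symm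
        _ = ((Qi i).rnDeriv Q ω).toReal := by rw [hgi]
    exact (hindQ.comp measurable_id hhm).congr
      (Filter.EventuallyEq.refl _ _) hZ
end

section
/- Let $P$ and $Q$ be equivalent probability measures on $(\Omega,\mathcal A)$ with $(P,Q)$ conditionally atomless, and $G$ a Borel probability measure on $\mathbb{R}$. Then the set $\{F : F$ is a Borel probability measure on $\mathbb{R}$ such that there exists a measurable $X:\Omega\to\mathbb{R}$ with $P\circ X^{-1}=F$ and $Q\circ X^{-1}=G\}$ is convex. -/
open MeasureTheory ProbabilityTheory
open scoped ENNReal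

open Set Filter Topology

section Auxiliary

noncomputable def cdfR (μ : Measure ℝ) (x : ℝ) : ℝ := (μ (Iic x)).toReal

section CDF

variable {μ : Measure ℝ} [IsProbabilityMeasure μ]

lemma cdfR_mono : Monotone (cdfR μ) := fun a b hab =>
  ENNReal.toReal_mono (measure_ne_top μ _) (measure_mono (Iic_subset_Iic.2 hab))

lemma cdfR_nonneg (x : ℝ) : 0 ≤ cdfR μ x := ENNReal.toReal_nonneg

lemma cdfR_le_one (x : ℝ) : cdfR μ x ≤ 1 := by
  have h : μ (Iic x) ≤ 1 := prob_le_one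
  calc cdfR μ x ≤ (1 : ℝ≥0∞).toReal := ENNReal.toReal_mono (by simp) h
  _ = 1 := by simp

lemma ofReal_cdfR (x : ℝ) : ENNReal.ofReal (cdfR μ x) = μ (Iic x) :=
  ENNReal.ofReal_toReal (measure_ne_top μ _)

lemma iInter_Iic_add_inv (x : ℝ) : ⋂ n : ℕ, Iic (x + ((n : ℝ) + 1)⁻¹) = Iic x := by
  ext y
  simp only [mem_iInter, mem_Iic]
  constructor
  · intro h
    by_contra hyx
    push_neg at hyx
    obtain ⟨n, hn⟩ := exists_nat_one_div_lt (sub_pos.2 hyx)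
    rw [one_div] at hn
    have := h n
    linarith
  · intro h n
    have : (0 : ℝ) < ((n : ℝ) + 1)⁻¹ := by positivity
    linarith

lemma antitone_Iic_add_inv (x : ℝ) :
    Antitone (fun n : ℕ => Iic (x + ((n : ℝ) + 1)⁻¹)) := by
  intro n m hnm
  refine Iic_subset_Iic.2 ?_
  have h1 : ((n : ℝ) + 1) ≤ ((m : ℝ) + 1) := by
    have := (Nat.cast_le (α := ℝ)).2 hnm; linarith
  have h2 : ((m : ℝ) + 1)⁻¹ ≤ ((n : ℝ) + 1)⁻¹ :=
    inv_anti₀ (by positivity) h1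
  linarith

lemma iUnion_Iic_sub_inv (x : ℝ) : ⋃ n : ℕ, Iic (x - ((n : ℝ) + 1)⁻¹) = Iio x := by
  ext y
  simp only [mem_iUnion, mem_Iic, mem_Iio]
  constructor
  · rintro ⟨n, hn⟩
    have : (0 : ℝ) < ((n : ℝ) + 1)⁻¹ := by positivity
    linarith
  · intro h
    obtain ⟨n, hn⟩ := exists_nat_one_div_lt (sub_pos.2 h)
    rw [one_div] at hn
    exact ⟨n, by linarith⟩

lemma monotone_Iic_sub_inv (x : ℝ) :
    Monotone (fun n : ℕ => Iic (x - ((n : ℝ) + 1)⁻¹)) := by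
  intro n m hnm
  refine Iic_subset_Iic.2 ?_
  have h1 : ((n : ℝ) + 1) ≤ ((m : ℝ) + 1) := by
    have := (Nat.cast_le (α := ℝ)).2 hnm; linarith
  have h2 : ((m : ℝ) + 1)⁻¹ ≤ ((n : ℝ) + 1)⁻¹ :=
    inv_anti₀ (by positivity) h1
  linarith

lemma tendsto_cdfR_right (x : ℝ) :
    Tendsto (fun n : ℕ => μ (Iic (x + ((n : ℝ) + 1)⁻¹))) atTop (𝓝 (μ (Iic x))) := by
  have h := tendsto_measure_iInter_atTop (μ := μ)
    (s := fun n : ℕ => Iic (x + ((n : ℝ) + 1)⁻¹))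
    (fun n => measurableSet_Iic.nullMeasurableSet) (antitone_Iic_add_inv x)
    ⟨0, measure_ne_top μ _⟩
  rwa [iInter_Iic_add_inv] at h

lemma le_cdfR_of_forall {x u : ℝ} (h : ∀ n : ℕ, u ≤ cdfR μ (x + ((n : ℝ) + 1)⁻¹)) :
    u ≤ cdfR μ x := by
  have h2 : Tendsto (fun n : ℕ => cdfR μ (x + ((n : ℝ) + 1)⁻¹)) atTop (𝓝 (cdfR μ x)) :=
    (ENNReal.tendsto_toReal (measure_ne_top μ _)).comp (tendsto_cdfR_right x)
  exact ge_of_tendsto' h2 h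

lemma exists_cdfR_lt {u : ℝ} (hu : 0 < u) : ∃ b : ℝ, cdfR μ b < u := by
  have hI : ⋂ n : ℕ, Iic (-(n : ℝ)) = (∅ : Set ℝ) := by
    ext y
    simp only [mem_iInter, mem_Iic, mem_empty_iff_false, iff_false, not_forall, not_le]
    obtain ⟨n, hn⟩ := exists_nat_gt (-y)
    exact ⟨n, by linarith⟩
  have htend := tendsto_measure_iInter_atTop (μ := μ) (s := fun n : ℕ => Iic (-(n : ℝ)))
    (fun n => measurableSet_Iic.nullMeasurableSet)
    (fun n m hnm => Iic_subset_Iic.2 (by exact_mod_cast neg_le_neg (Nat.cast_le.2 hnm)))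
    ⟨0, measure_ne_top μ _⟩
  rw [hI, measure_empty] at htend
  have h2 : Tendsto (fun n : ℕ => cdfR μ (-(n : ℝ))) atTop (𝓝 (0 : ℝ)) := by
    have := (ENNReal.tendsto_toReal (by simp)).comp htend
    simpa [cdfR, Function.comp_def] using this
  obtain ⟨n, hn⟩ := (h2.eventually_lt_const hu).exists
  exact ⟨-(n : ℝ), hn⟩

lemma exists_lt_cdfR {u : ℝ} (hu : u < 1) : ∃ b : ℝ, u < cdfR μ b := by
  have hI : ⋃ n : ℕ, Iic ((n : ℝ)) = (univ : Set ℝ) := by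
    ext y
    simp only [mem_iUnion, mem_Iic, mem_univ, iff_true]
    obtain ⟨n, hn⟩ := exists_nat_gt y
    exact ⟨n, hn.le⟩
  have htend := tendsto_measure_iUnion_atTop (μ := μ) (s := fun n : ℕ => Iic ((n : ℝ)))
    (fun n m hnm => Iic_subset_Iic.2 (Nat.cast_le.2 hnm))
  rw [hI, measure_univ] at htend
  have h2 : Tendsto (fun n : ℕ => cdfR μ ((n : ℝ))) atTop (𝓝 (1 : ℝ)) := by
    have := (ENNReal.tendsto_toReal (by simp)).comp htend
    simpa [cdfR, Function.comp_def] using this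
  obtain ⟨n, hn⟩ := (h2.eventually_const_lt hu).exists
  exact ⟨(n : ℝ), hn⟩

end CDF

noncomputable def quantR (μ : Measure ℝ) (u : ℝ) : ℝ := sInf {x | u ≤ cdfR μ x}

section Quant

variable {μ : Measure ℝ} [IsProbabilityMeasure μ]

lemma bddBelow_quant_set {u : ℝ} (h0 : 0 < u) : BddBelow {x | u ≤ cdfR μ x} := by
  obtain ⟨b, hb⟩ := exists_cdfR_lt (μ := μ) h0
  refine ⟨b, fun y hy => ?_⟩
  by_contra hyb
  push_neg at hyb
  exact absurd (hy.trans (cdfR_mono hyb.le)) (not_le.2 hb)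

lemma nonempty_quant_set {u : ℝ} (h1 : u < 1) : {x | u ≤ cdfR μ x}.Nonempty := by
  obtain ⟨c, hc⟩ := exists_lt_cdfR (μ := μ) h1
  exact ⟨c, hc.le⟩

lemma quantR_le_iff {u x : ℝ} (h0 : 0 < u) (h1 : u < 1) :
    quantR μ u ≤ x ↔ u ≤ cdfR μ x := by
  constructor
  · intro hq
    refine le_cdfR_of_forall (fun n => ?_)
    have hpos : (0 : ℝ) < ((n : ℝ) + 1)⁻¹ := by positivity
    have hlt : sInf {x | u ≤ cdfR μ x} < x + ((n : ℝ) + 1)⁻¹ :=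
      lt_of_le_of_lt hq (by linarith)
    obtain ⟨y, hy, hyx⟩ := (csInf_lt_iff (bddBelow_quant_set h0) (nonempty_quant_set h1)).1 hlt
    exact hy.trans (cdfR_mono hyx.le)
  · intro hx
    exact csInf_le (bddBelow_quant_set h0) hx

lemma cdfR_quantR (hatom : ∀ x : ℝ, μ {x} = 0) {u : ℝ} (h0 : 0 < u) (h1 : u < 1) :
    cdfR μ (quantR μ u) = u := by
  have hge : u ≤ cdfR μ (quantR μ u) := (quantR_le_iff h0 h1).1 le_rfl
  refine le_antisymm ?_ hge
  by_contra hlt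
  push_neg at hlt
  set q := quantR μ u with hq
  have hIio : μ (Iio q) = μ (Iic q) := by
    refine le_antisymm (measure_mono Iio_subset_Iic_self) ?_
    calc μ (Iic q) = μ (Iio q ∪ {q}) := by rw [Iio_union_right]
    _ ≤ μ (Iio q) + μ {q} := measure_union_le _ _
    _ = μ (Iio q) := by rw [hatom q, add_zero]
  have htend : Tendsto (fun n : ℕ => μ (Iic (q - ((n : ℝ) + 1)⁻¹))) atTop (𝓝 (μ (Iio q))) := by
    rw [← iUnion_Iic_sub_inv q]
    exact tendsto_measure_iUnion_atTop (monotone_Iic_sub_inv q)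
  have hofu : ENNReal.ofReal u < μ (Iio q) := by
    rw [hIio, ← ofReal_cdfR (μ := μ) q]
    exact (ENNReal.ofReal_lt_ofReal_iff (h0.trans hlt)).2 hlt
  obtain ⟨n, hn⟩ := (htend.eventually_const_lt hofu).exists
  have hmem : u ≤ cdfR μ (q - ((n : ℝ) + 1)⁻¹) := by
    calc u = (ENNReal.ofReal u).toReal := (ENNReal.toReal_ofReal h0.le).symm
    _ ≤ (μ (Iic (q - ((n : ℝ) + 1)⁻¹))).toReal :=
        ENNReal.toReal_mono (measure_ne_top μ _) hn.le
    _ = cdfR μ (q - ((n : ℝ) + 1)⁻¹) := rfl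
  have hq' : q ≤ q - ((n : ℝ) + 1)⁻¹ := (quantR_le_iff h0 h1).2 hmem
  have hpos : (0 : ℝ) < ((n : ℝ) + 1)⁻¹ := by positivity
  linarith

lemma measure_cdfR_le_le {u : ℝ} (h1 : u < 1) :
    μ {z | cdfR μ z ≤ u} ≤ ENNReal.ofReal u := by
  set S := {z | cdfR μ z ≤ u} with hS
  obtain ⟨c, hc⟩ := exists_lt_cdfR (μ := μ) h1
  have hub : ∀ z ∈ S, z ≤ c := by
    intro z hz
    by_contra h
    push_neg at h
    exact absurd hz (not_le.2 (hc.trans_le (cdfR_mono h.le)))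
  rcases eq_empty_or_nonempty S with hSe | hSne
  · simp [hSe]
  have hbddS : BddAbove S := ⟨c, hub⟩
  by_cases hcs : (sSup S) ∈ S
  · calc μ S ≤ μ (Iic (sSup S)) := measure_mono (fun z hz => le_csSup hbddS hz)
    _ = ENNReal.ofReal (cdfR μ (sSup S)) := (ofReal_cdfR (sSup S)).symm
    _ ≤ ENNReal.ofReal u := ENNReal.ofReal_le_ofReal hcs
  · have hsub : S ⊆ Iio (sSup S) := fun z hz =>
      lt_of_le_of_ne (le_csSup hbddS hz) (fun h => hcs (by rwa [← h]))
    refine (measure_mono hsub).trans ?_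
    rw [← iUnion_Iic_sub_inv (sSup S)]
    have htend := tendsto_measure_iUnion_atTop (μ := μ) (monotone_Iic_sub_inv (sSup S))
    refine le_of_tendsto htend (Eventually.of_forall (fun n => ?_))
    have hpos : (0 : ℝ) < ((n : ℝ) + 1)⁻¹ := by positivity
    have hlt : (sSup S) - ((n : ℝ) + 1)⁻¹ < (sSup S) := by linarith
    obtain ⟨z, hzS, hzgt⟩ := exists_lt_of_lt_csSup hSne hlt
    have hmem : (sSup S) - ((n : ℝ) + 1)⁻¹ ∈ S := le_trans (cdfR_mono hzgt.le) hzS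
    calc μ (Iic ((sSup S) - ((n : ℝ) + 1)⁻¹)) = ENNReal.ofReal (cdfR μ ((sSup S) - ((n : ℝ) + 1)⁻¹)) :=
        (ofReal_cdfR _).symm
    _ ≤ ENNReal.ofReal u := ENNReal.ofReal_le_ofReal hmem

lemma measure_cdfR_le_eq (hatom : ∀ x : ℝ, μ {x} = 0) {u : ℝ} (h0 : 0 ≤ u) (h1 : u < 1) :
    μ {z | cdfR μ z ≤ u} = ENNReal.ofReal u := by
  refine le_antisymm (measure_cdfR_le_le h1) ?_
  rcases eq_or_lt_of_le h0 with h | h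
  · simp [← h]
  · have ha := cdfR_quantR hatom h h1
    have he : ENNReal.ofReal u = μ (Iic (quantR μ u)) := by
      conv_lhs => rw [← ha]
      exact ofReal_cdfR _
    calc ENNReal.ofReal u = μ (Iic (quantR μ u)) := he
    _ ≤ μ {z | cdfR μ z ≤ u} := measure_mono (fun z hz => le_trans (cdfR_mono hz) ha.le)

lemma measurable_cdfR : Measurable (cdfR μ) := cdfR_mono.measurable

end Quant

noncomputable def qk (κ : ProbabilityTheory.Kernel ℝ ℝ) (d u : ℝ) : ℝ :=
  if 0 < u ∧ u < 1 then quantR (κ d) u else 0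

section KQ

variable {κ : ProbabilityTheory.Kernel ℝ ℝ} [IsMarkovKernel κ]

lemma measurable_qk : Measurable (fun p : ℝ × ℝ => qk κ p.1 p.2) := by
  apply measurable_of_Iic
  intro x
  have hA : MeasurableSet {p : ℝ × ℝ | p.2 ≤ (κ p.1 (Iic x)).toReal} :=
    measurableSet_le measurable_snd
      (((κ.measurable_coe measurableSet_Iic).comp measurable_fst).ennreal_toReal)
  have hC : MeasurableSet {p : ℝ × ℝ | 0 < p.2 ∧ p.2 < 1} := by
    have : {p : ℝ × ℝ | 0 < p.2 ∧ p.2 < 1} = Prod.snd ⁻¹' Ioo (0:ℝ) 1 := rfl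
    rw [this]
    exact measurable_snd measurableSet_Ioo
  by_cases hx : (0:ℝ) ≤ x
  · have hset : (fun p : ℝ × ℝ => qk κ p.1 p.2) ⁻¹' Iic x =
        ({p : ℝ × ℝ | 0 < p.2 ∧ p.2 < 1} ∩ {p : ℝ × ℝ | p.2 ≤ (κ p.1 (Iic x)).toReal}) ∪
          {p : ℝ × ℝ | 0 < p.2 ∧ p.2 < 1}ᶜ := by
      ext p
      by_cases hp : 0 < p.2 ∧ p.2 < 1
      · simp only [mem_preimage, mem_Iic, mem_union, mem_inter_iff, mem_setOf_eq, mem_compl_iff,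
          hp, not_true_eq_false, or_false, true_and, qk, if_pos hp]
        exact quantR_le_iff hp.1 hp.2
      · simp only [mem_preimage, mem_Iic, mem_union, mem_inter_iff, mem_setOf_eq, mem_compl_iff,
          hp, not_false_eq_true, or_true, iff_true, qk, if_neg hp]
        exact hx
    rw [hset]
    exact (hC.inter hA).union hC.compl
  · have hset : (fun p : ℝ × ℝ => qk κ p.1 p.2) ⁻¹' Iic x =
        {p : ℝ × ℝ | 0 < p.2 ∧ p.2 < 1} ∩ {p : ℝ × ℝ | p.2 ≤ (κ p.1 (Iic x)).toReal} := by
      ext p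
      by_cases hp : 0 < p.2 ∧ p.2 < 1
      · simp only [mem_preimage, mem_Iic, mem_inter_iff, mem_setOf_eq, hp, true_and, qk,
          if_pos hp]
        exact quantR_le_iff hp.1 hp.2
      · simp only [mem_preimage, mem_Iic, mem_inter_iff, mem_setOf_eq, hp, false_and, iff_false,
          qk, if_neg hp, not_le]
        exact lt_of_not_ge hx
    rw [hset]
    exact hC.inter hA

lemma measurable_qk_right (d : ℝ) : Measurable (fun u => qk κ d u) :=
  measurable_qk.comp (measurable_const.prodMk measurable_id)

lemma map_qk (d : ℝ) :
    (volume.restrict (Ioo (0:ℝ) 1)).map (fun u => qk κ d u) = κ d := by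
  have hprob : IsProbabilityMeasure (volume.restrict (Ioo (0:ℝ) 1)) :=
    ⟨by simp [Real.volume_Ioo]⟩
  haveI := hprob
  haveI : IsProbabilityMeasure ((volume.restrict (Ioo (0:ℝ) 1)).map (fun u => qk κ d u)) :=
    Measure.isProbabilityMeasure_map (measurable_qk_right d).aemeasurable
  refine Measure.ext_of_Iic _ _ (fun x => ?_)
  rw [Measure.map_apply (measurable_qk_right d) measurableSet_Iic,
    Measure.restrict_apply (measurable_qk_right d measurableSet_Iic)]
  have hset : (fun u => qk κ d u) ⁻¹' Iic x ∩ Ioo 0 1 = Ioo (0:ℝ) 1 ∩ Iic (cdfR (κ d) x) := by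
    ext u
    constructor
    · rintro ⟨hq, hu⟩
      refine ⟨hu, ?_⟩
      rw [mem_preimage, mem_Iic] at hq
      rw [qk, if_pos (And.intro hu.1 hu.2)] at hq
      exact (quantR_le_iff hu.1 hu.2).1 hq
    · rintro ⟨hu, hle⟩
      refine ⟨?_, hu⟩
      rw [mem_preimage, mem_Iic, qk, if_pos (And.intro hu.1 hu.2)]
      exact (quantR_le_iff hu.1 hu.2).2 hle
  rw [hset]
  have hF0 : 0 ≤ cdfR (κ d) x := cdfR_nonneg x
  rcases lt_or_ge (cdfR (κ d) x) 1 with hF1 | hF1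
  · have h2 : Ioo (0:ℝ) 1 ∩ Iic (cdfR (κ d) x) = Ioc 0 (cdfR (κ d) x) := by
      ext u
      simp only [mem_inter_iff, mem_Ioo, mem_Iic, mem_Ioc]
      exact ⟨fun h => ⟨h.1.1, h.2⟩, fun h => ⟨⟨h.1, lt_of_le_of_lt h.2 hF1⟩, h.2⟩⟩
    rw [h2, Real.volume_Ioc, sub_zero, ofReal_cdfR]
  · have hF1' : cdfR (κ d) x = 1 := le_antisymm (cdfR_le_one x) hF1
    have h2 : Ioo (0:ℝ) 1 ∩ Iic (cdfR (κ d) x) = Ioo 0 1 := by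
      refine inter_eq_left.2 (fun u hu => ?_)
      rw [mem_Iic, hF1']
      exact hu.2.le
    rw [h2, Real.volume_Ioo, ← ofReal_cdfR (μ := κ d) x, hF1']
    norm_num
end KQ

section Branch

variable {κ : ProbabilityTheory.Kernel ℝ ℝ} [IsMarkovKernel κ]

lemma vol_qk_mem (d : ℝ) {B : Set ℝ} (hB : MeasurableSet B) :
    volume (Ioo (0:ℝ) 1 ∩ {v | qk κ d v ∈ B}) = κ d B := by
  have h1 : Ioo (0:ℝ) 1 ∩ {v | qk κ d v ∈ B} = (fun u => qk κ d u) ⁻¹' B ∩ Ioo 0 1 := by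
    rw [inter_comm]; rfl
  rw [h1, ← Measure.restrict_apply (measurable_qk_right d hB),
    ← Measure.map_apply (measurable_qk_right d) hB, map_qk]

lemma branch1 {s : ℝ} (hs0 : 0 < s) (hs1 : s < 1) (d : ℝ) {B : Set ℝ} (hB : MeasurableSet B) :
    (volume.restrict (Ioo (0:ℝ) 1)) {u | u < s ∧ qk κ d (u / s) ∈ B} =
      ENNReal.ofReal s * κ d B := by
  have hmeas : MeasurableSet {u : ℝ | u < s ∧ qk κ d (u / s) ∈ B} := by
    refine (measurableSet_lt measurable_id measurable_const).inter ?_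
    exact ((measurable_qk_right d).comp (measurable_id.div_const s)) hB
  rw [Measure.restrict_apply hmeas]
  have hset : {u : ℝ | u < s ∧ qk κ d (u / s) ∈ B} ∩ Ioo 0 1 =
      (fun u : ℝ => u * s⁻¹) ⁻¹' (Ioo (0:ℝ) 1 ∩ {v | qk κ d v ∈ B}) := by
    ext u
    simp only [mem_inter_iff, mem_setOf_eq, mem_Ioo, mem_preimage, ← div_eq_mul_inv]
    constructor
    · rintro ⟨⟨hus, hqk⟩, hu0, hu1⟩
      exact ⟨⟨div_pos hu0 hs0, (div_lt_one hs0).2 hus⟩, hqk⟩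
    · rintro ⟨⟨hd0, hd1⟩, hqk⟩
      have hu0 : 0 < u := by
        by_contra h
        push_neg at h
        exact absurd hd0 (not_lt.2 (div_nonpos_of_nonpos_of_nonneg h hs0.le))
      have hus : u < s := (div_lt_one hs0).1 hd1
      exact ⟨⟨hus, hqk⟩, hu0, hus.trans hs1⟩
  rw [hset, Real.volume_preimage_mul_right (inv_ne_zero hs0.ne'), inv_inv,
    abs_of_pos hs0, vol_qk_mem d hB]

lemma branch2 {s : ℝ} (hs0 : 0 < s) (hs1 : s < 1) (d : ℝ) {B : Set ℝ} (hB : MeasurableSet B) :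
    (volume.restrict (Ioo (0:ℝ) 1)) {u | ¬ u < s ∧ qk κ d ((u - s) / (1 - s)) ∈ B} =
      ENNReal.ofReal (1 - s) * κ d B := by
  have h1s : (0:ℝ) < 1 - s := by linarith
  have hmeas : MeasurableSet {u : ℝ | ¬ u < s ∧ qk κ d ((u - s) / (1 - s)) ∈ B} := by
    refine ((measurableSet_lt measurable_id measurable_const).compl).inter ?_
    exact ((measurable_qk_right d).comp ((measurable_id.sub_const s).div_const (1 - s))) hB
  rw [Measure.restrict_apply hmeas]
  set T := Ioo (0:ℝ) 1 ∩ {v | qk κ d v ∈ B} with hT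
  set pre := (fun u : ℝ => (u - s) / (1 - s)) ⁻¹' T with hpre
  have hsub1 : pre ⊆ {u : ℝ | ¬ u < s ∧ qk κ d ((u - s) / (1 - s)) ∈ B} ∩ Ioo 0 1 := by
    rintro u ⟨⟨hd0, hd1⟩, hqk⟩
    have hsu : s < u := by
      by_contra h
      push_neg at h
      exact absurd hd0 (not_lt.2 (div_nonpos_of_nonpos_of_nonneg (by linarith) h1s.le))
    have hu1 : u < 1 := by
      have := (div_lt_one h1s).1 hd1
      linarith
    exact ⟨⟨not_lt.2 hsu.le, hqk⟩, hs0.trans hsu, hu1⟩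
  have hsub2 : {u : ℝ | ¬ u < s ∧ qk κ d ((u - s) / (1 - s)) ∈ B} ∩ Ioo 0 1 ⊆ pre ∪ {s} := by
    rintro u ⟨⟨hnlt, hqk⟩, hu0, hu1⟩
    rcases eq_or_lt_of_le (not_lt.1 hnlt) with h | h
    · exact Or.inr (by simp [← h])
    · refine Or.inl ⟨⟨div_pos (by linarith) h1s, (div_lt_one h1s).2 (by linarith)⟩, hqk⟩
  have hvol : volume ({u : ℝ | ¬ u < s ∧ qk κ d ((u - s) / (1 - s)) ∈ B} ∩ Ioo 0 1) =
      volume pre := by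
    refine le_antisymm ?_ (measure_mono hsub1)
    calc volume _ ≤ volume (pre ∪ {s}) := measure_mono hsub2
    _ ≤ volume pre + volume {s} := measure_union_le _ _
    _ = volume pre := by rw [Real.volume_singleton, add_zero]
  rw [hvol]
  have hcomp : pre = (fun u : ℝ => u + (-s)) ⁻¹' ((fun v : ℝ => v * (1 - s)⁻¹) ⁻¹' T) := by
    ext u
    simp [hpre, div_eq_mul_inv, sub_eq_add_neg]
  rw [hcomp, measure_preimage_add_right volume (-s) _,
    Real.volume_preimage_mul_right (inv_ne_zero h1s.ne'), inv_inv, abs_of_pos h1s,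
    vol_qk_mem d hB]

end Branch


end Auxiliary

/-- `(P,Q)` is conditionally atomless: there exist a dominating probability measure `R` and a
random variable with atomless distribution under `R`, independent of `(dP/dR, dQ/dR)` under `R`. -/
def CondAtomlessPair {Ω : Type} [MeasurableSpace Ω] (P Q : Measure Ω) : Prop :=
  ∃ R : Measure Ω, IsProbabilityMeasure R ∧ P ≪ R ∧ Q ≪ R ∧
    ∃ Z : Ω → ℝ, Measurable Z ∧ (∀ x : ℝ, R.map Z {x} = 0) ∧
      IndepFun Z (fun ω => ((P.rnDeriv R ω).toReal, (Q.rnDeriv R ω).toReal)) R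

/-- Corollary 5.3. For equivalent probability measures `P, Q` on `(Ω, 𝒜)`
with `(P,Q)` conditionally atomless, and a Borel probability measure `G` on `ℝ`, the set of
Borel probability measures `F` such that some measurable `X : Ω → ℝ` has distribution `F`
under `P` and `G` under `Q` is convex. -/
theorem compatible_distribution_set_convex
    {Ω : Type} [MeasurableSpace Ω]
    (P Q : Measure Ω) [IsProbabilityMeasure P] [IsProbabilityMeasure Q]
    (hPQ : P ≪ Q) (hQP : Q ≪ P) (hca : CondAtomlessPair P Q)
    (G : Measure ℝ) [IsProbabilityMeasure G] :
    ∀ F₁ F₂ : Measure ℝ,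
      (∃ X : Ω → ℝ, Measurable X ∧ P.map X = F₁ ∧ Q.map X = G) →
      (∃ X : Ω → ℝ, Measurable X ∧ P.map X = F₂ ∧ Q.map X = G) →
      ∀ t : ℝ≥0∞, t ≤ 1 →
        ∃ X : Ω → ℝ, Measurable X ∧
          P.map X = t • F₁ + (1 - t) • F₂ ∧ Q.map X = G := by
  rintro F₁ F₂ ⟨X₁, hX₁m, hX₁P, hX₁Q⟩ ⟨X₂, hX₂m, hX₂P, hX₂Q⟩ t htle
  by_cases ht0 : t = 0
  · exact ⟨X₂, hX₂m, by simp [ht0, hX₂P], hX₂Q⟩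
  by_cases ht1 : t = 1
  · exact ⟨X₁, hX₁m, by simp [ht1, hX₁P], hX₁Q⟩
  have htop : t ≠ ⊤ := ne_top_of_le_ne_top ENNReal.one_ne_top htle
  set s : ℝ := t.toReal with hsdef
  have hs0 : 0 < s := ENNReal.toReal_pos ht0 htop
  have hs1 : s < 1 := by
    have h := (ENNReal.toReal_lt_toReal htop ENNReal.one_ne_top).2
      (lt_of_le_of_ne htle ht1)
    simpa using h
  obtain ⟨R, hRprob, hPR, hQR, Z, hZm, hZatom, hindep⟩ := hca
  haveI := hRprob
  set D : Ω → ℝ := fun ω => (P.rnDeriv Q ω).toReal with hDdef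
  have hDm : Measurable D := (Measure.measurable_rnDeriv P Q).ennreal_toReal
  set μZ : Measure ℝ := Q.map Z with hμZ
  haveI : IsProbabilityMeasure μZ := Measure.isProbabilityMeasure_map hZm.aemeasurable
  have hcdfm : Measurable (cdfR μZ) := measurable_cdfR
  set U : Ω → ℝ := fun ω => cdfR μZ (Z ω) with hUdef
  have hUm : Measurable U := hcdfm.comp hZm
  have hμZatom : ∀ x : ℝ, μZ {x} = 0 := by
    intro x
    have hR : R.map Z {x} = 0 := hZatom x
    rw [Measure.map_apply hZm (measurableSet_singleton x)] at hR
    rw [hμZ, Measure.map_apply hZm (measurableSet_singleton x)]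
    exact hQR hR
  -- the key independence transfer
  set W : Ω → ℝ × ℝ := fun ω => ((P.rnDeriv R ω).toReal, (Q.rnDeriv R ω).toReal) with hWdef
  have hWm : Measurable W :=
    (Measure.measurable_rnDeriv P R).ennreal_toReal.prodMk
      (Measure.measurable_rnDeriv Q R).ennreal_toReal
  have key : ∀ A : Set ℝ, MeasurableSet A → ∀ B' : Set (ℝ × ℝ), MeasurableSet B' →
      Q (Z ⁻¹' A ∩ W ⁻¹' B') = R (Z ⁻¹' A) * Q (W ⁻¹' B') := by
    intro A hA B' hB'
    set f1 : ℝ → ℝ≥0∞ := A.indicator (fun _ => 1) with hf1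
    set f2 : ℝ × ℝ → ℝ≥0∞ :=
      fun p => B'.indicator (fun _ => (1:ℝ≥0∞)) p * ENNReal.ofReal p.2 with hf2
    have hf1m : Measurable f1 := measurable_const.indicator hA
    have hf2m : Measurable f2 :=
      (measurable_const.indicator hB').mul measurable_snd.ennreal_ofReal
    have haeprod : ∀ᵐ ω ∂ R, f1 (Z ω) * f2 (W ω) =
        (Z ⁻¹' A ∩ W ⁻¹' B').indicator (fun ω => Q.rnDeriv R ω) ω := by
      filter_upwards [Q.rnDeriv_ne_top R] with ω htop'
      have hW2 : ENNReal.ofReal (W ω).2 = Q.rnDeriv R ω := by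
        simp [hWdef, ENNReal.ofReal_toReal htop']
      by_cases hz : Z ω ∈ A <;> by_cases hw : W ω ∈ B' <;>
        simp [hf1, hf2, Set.indicator_apply, hz, hw, Set.mem_inter_iff, hW2]
    have heq1 : Q (Z ⁻¹' A ∩ W ⁻¹' B') = ∫⁻ ω, f1 (Z ω) * f2 (W ω) ∂ R := by
      rw [← Measure.setLIntegral_rnDeriv hQR]
      rw [← lintegral_indicator ((hZm hA).inter (hWm hB'))]
      exact (lintegral_congr_ae haeprod).symm
    have hindep2 : IndepFun (f1 ∘ Z) (f2 ∘ W) R := hindep.comp hf1m hf2m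
    have hprod := lintegral_mul_eq_lintegral_mul_lintegral_of_indepFun
      (μ := R) (hf1m.comp hZm) (hf2m.comp hWm) hindep2
    have hfact1 : ∫⁻ ω, f1 (Z ω) ∂ R = R (Z ⁻¹' A) := by
      have h : ∀ ω, f1 (Z ω) = (Z ⁻¹' A).indicator (fun _ => (1:ℝ≥0∞)) ω := by
        intro ω; by_cases hz : Z ω ∈ A <;> simp [hf1, Set.indicator_apply, hz]
      rw [lintegral_congr h, lintegral_indicator (hZm hA)]
      simp
    have hfact2 : ∫⁻ ω, f2 (W ω) ∂ R = Q (W ⁻¹' B') := by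
      have hae2 : ∀ᵐ ω ∂ R, f2 (W ω) =
          (W ⁻¹' B').indicator (fun ω => Q.rnDeriv R ω) ω := by
        filter_upwards [Q.rnDeriv_ne_top R] with ω htop'
        have hW2 : ENNReal.ofReal (W ω).2 = Q.rnDeriv R ω := by
          simp [hWdef, ENNReal.ofReal_toReal htop']
        by_cases hw : W ω ∈ B' <;> simp [hf2, Set.indicator_apply, hw, hW2]
      rw [lintegral_congr_ae hae2, lintegral_indicator (hWm hB'),
        Measure.setLIntegral_rnDeriv hQR]
    calc Q (Z ⁻¹' A ∩ W ⁻¹' B') = ∫⁻ ω, f1 (Z ω) * f2 (W ω) ∂ R := heq1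
    _ = (∫⁻ ω, f1 (Z ω) ∂ R) * ∫⁻ ω, f2 (W ω) ∂ R := hprod
    _ = R (Z ⁻¹' A) * Q (W ⁻¹' B') := by rw [hfact1, hfact2]
  have hQZA : ∀ A : Set ℝ, MeasurableSet A → Q (Z ⁻¹' A) = R (Z ⁻¹' A) := by
    intro A hA
    have h := key A hA univ MeasurableSet.univ
    simpa using h
  have hDae : D =ᵐ[Q] (fun ω => (W ω).1 / (W ω).2) := by
    have hmul : P.rnDeriv Q * Q.rnDeriv R =ᵐ[R] P.rnDeriv R :=
      Measure.rnDeriv_mul_rnDeriv hPQ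
    have hgpos : ∀ᵐ ω ∂Q, 0 < Q.rnDeriv R ω := Measure.rnDeriv_pos hQR
    have hgtop : ∀ᵐ ω ∂Q, Q.rnDeriv R ω ≠ ∞ := hQR.ae_le (Q.rnDeriv_ne_top R)
    have hmulQ : ∀ᵐ ω ∂Q, P.rnDeriv Q ω * Q.rnDeriv R ω = P.rnDeriv R ω := hQR.ae_le hmul
    filter_upwards [hgpos, hgtop, hmulQ] with ω h1 h2 h3
    have hgne : (Q.rnDeriv R ω).toReal ≠ 0 := ENNReal.toReal_ne_zero.2 ⟨h1.ne', h2⟩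
    have hW1 : (W ω).1 = (P.rnDeriv Q ω).toReal * (Q.rnDeriv R ω).toReal := by
      simp only [hWdef]
      rw [← ENNReal.toReal_mul, h3]
    show D ω = (W ω).1 / (W ω).2
    rw [hW1]
    simp only [hWdef, hDdef]
    rw [mul_div_assoc, div_self hgne, mul_one]
  have hZD : IndepFun Z D Q := by
    rw [indepFun_iff_measure_inter_preimage_eq_mul]
    intro A B hA hB
    have hφm : Measurable (fun p : ℝ × ℝ => p.1 / p.2) :=
      measurable_fst.div measurable_snd
    have h1 : Q (Z ⁻¹' A ∩ D ⁻¹' B) = Q (Z ⁻¹' A ∩ W ⁻¹' ((fun p : ℝ × ℝ => p.1 / p.2) ⁻¹' B)) := by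
      apply measure_congr
      refine eventuallyEq_set.2 ?_
      filter_upwards [hDae] with ω h
      simp [Set.mem_inter_iff, Set.mem_preimage, h]
    have h2 : Q (W ⁻¹' ((fun p : ℝ × ℝ => p.1 / p.2) ⁻¹' B)) = Q (D ⁻¹' B) := by
      apply measure_congr
      refine eventuallyEq_set.2 ?_
      filter_upwards [hDae] with ω h
      simp [Set.mem_preimage, h]
    rw [h1, key A hA _ (hφm hB), ← hQZA A hA, h2]
  have hDU : IndepFun D U Q := (hZD.comp hcdfm measurable_id).symm
  haveI : IsProbabilityMeasure (volume.restrict (Ioo (0:ℝ) 1)) := ⟨by simp [Real.volume_Ioo]⟩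
  have hUlaw : Q.map U = volume.restrict (Ioo (0:ℝ) 1) := by
    haveI : IsProbabilityMeasure (Q.map U) := Measure.isProbabilityMeasure_map hUm.aemeasurable
    refine Measure.ext_of_Iic _ _ (fun u => ?_)
    rw [Measure.map_apply hUm measurableSet_Iic]
    have hpre : U ⁻¹' Iic u = Z ⁻¹' {z | cdfR μZ z ≤ u} := rfl
    have hsm : MeasurableSet {z | cdfR μZ z ≤ u} := hcdfm measurableSet_Iic
    rw [hpre, ← Measure.map_apply hZm hsm, ← hμZ, Measure.restrict_apply measurableSet_Iic]
    rcases lt_or_ge u 0 with hu | hu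
    · have h1 : {z | cdfR μZ z ≤ u} = (∅ : Set ℝ) := by
        ext z
        simp only [mem_setOf_eq, mem_empty_iff_false, iff_false, not_le]
        exact hu.trans_le (cdfR_nonneg z)
      have h2 : Iic u ∩ Ioo (0:ℝ) 1 = ∅ := by
        ext v
        simp only [mem_inter_iff, mem_Iic, mem_Ioo, mem_empty_iff_false, iff_false, not_and]
        intro h1v h2v
        linarith
      rw [h1, h2, measure_empty, measure_empty]
    rcases lt_or_ge u 1 with hu1 | hu1
    · rw [measure_cdfR_le_eq hμZatom hu hu1]
      have h2 : Iic u ∩ Ioo (0:ℝ) 1 = Ioc 0 u := by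
        ext v
        simp only [mem_inter_iff, mem_Iic, mem_Ioo, mem_Ioc]
        exact ⟨fun h => ⟨h.2.1, h.1⟩, fun h => ⟨h.2, h.1, lt_of_le_of_lt h.2 hu1⟩⟩
      rw [h2, Real.volume_Ioc, sub_zero]
    · have h1 : {z | cdfR μZ z ≤ u} = (univ : Set ℝ) :=
        eq_univ_of_forall (fun z => le_trans (cdfR_le_one z) hu1)
      have h2 : Iic u ∩ Ioo (0:ℝ) 1 = Ioo 0 1 :=
        inter_eq_right.2 (fun v hv => le_trans hv.2.le hu1)
      rw [h1, h2, measure_univ, Real.volume_Ioo]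
      norm_num
  set ν : Measure ℝ := Q.map D with hν
  haveI : IsProbabilityMeasure ν := Measure.isProbabilityMeasure_map hDm.aemeasurable
  have hjoint : Q.map (fun ω => (D ω, U ω)) = ν.prod (volume.restrict (Ioo (0:ℝ) 1)) := by
    have h := (indepFun_iff_map_prod_eq_prod_map_map hDm.aemeasurable hUm.aemeasurable).1 hDU
    rw [h, hUlaw]
  set ρ₁ : Measure (ℝ × ℝ) := Q.map (fun ω => (D ω, X₁ ω)) with hρ₁
  set ρ₂ : Measure (ℝ × ℝ) := Q.map (fun ω => (D ω, X₂ ω)) with hρ₂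
  haveI : IsProbabilityMeasure ρ₁ := Measure.isProbabilityMeasure_map (hDm.prodMk hX₁m).aemeasurable
  haveI : IsProbabilityMeasure ρ₂ := Measure.isProbabilityMeasure_map (hDm.prodMk hX₂m).aemeasurable
  set κ₁ := ρ₁.condKernel with hκ₁
  set κ₂ := ρ₂.condKernel with hκ₂
  haveI hmk₁ : IsMarkovKernel κ₁ := by rw [hκ₁]; infer_instance
  haveI hmk₂ : IsMarkovKernel κ₂ := by rw [hκ₂]; infer_instance
  have hcpc : ∀ (μ₁ μ₂ : Measure ℝ) (κ : ProbabilityTheory.Kernel ℝ ℝ) [SFinite μ₁]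
      [SFinite μ₂] [IsSFiniteKernel κ], μ₁ = μ₂ → μ₁ ⊗ₘ κ = μ₂ ⊗ₘ κ := by
    intro μ₁ μ₂ κ _ _ _ h
    subst h
    rfl
  have hfst₁ : ρ₁.fst = ν := by
    rw [hρ₁, hν]
    exact Measure.fst_map_prodMk hX₁m
  have hfst₂ : ρ₂.fst = ν := by
    rw [hρ₂, hν]
    exact Measure.fst_map_prodMk hX₂m
  have hd₁ : ν ⊗ₘ κ₁ = ρ₁ :=
    (hcpc ν ρ₁.fst κ₁ hfst₁.symm).trans (ρ₁.disintegrate ρ₁.condKernel)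
  have hd₂ : ν ⊗ₘ κ₂ = ρ₂ :=
    (hcpc ν ρ₂.fst κ₂ hfst₂.symm).trans (ρ₂.disintegrate ρ₂.condKernel)
  -- the pasted random variable
  set Ψ : ℝ × ℝ → ℝ :=
    fun p => if p.2 < s then qk κ₁ p.1 (p.2 / s) else qk κ₂ p.1 ((p.2 - s) / (1 - s)) with hΨ
  have hΨm : Measurable Ψ := by
    refine Measurable.ite (measurableSet_lt measurable_snd measurable_const) ?_ ?_
    · exact measurable_qk.comp (measurable_fst.prodMk (measurable_snd.div_const s))
    · exact measurable_qk.comp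
        (measurable_fst.prodMk ((measurable_snd.sub_const s).div_const (1 - s)))
  set X : Ω → ℝ := fun ω => Ψ (D ω, U ω) with hX
  have hXm : Measurable X := hΨm.comp (hDm.prodMk hUm)
  have hsplit : ∀ d : ℝ, ∀ B : Set ℝ, MeasurableSet B →
      (volume.restrict (Ioo (0:ℝ) 1)) (Prod.mk d ⁻¹' (Ψ ⁻¹' B)) =
        ENNReal.ofReal s * κ₁ d B + ENNReal.ofReal (1 - s) * κ₂ d B := by
    intro d B hB
    have hpre : Prod.mk d ⁻¹' (Ψ ⁻¹' B) =
        {u | u < s ∧ qk κ₁ d (u / s) ∈ B} ∪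
          {u | ¬ u < s ∧ qk κ₂ d ((u - s) / (1 - s)) ∈ B} := by
      ext u
      by_cases hu : u < s
      · simp [hΨ, hu]
      · simp [hΨ, hu, not_lt.1 hu]
    have hm2 : MeasurableSet {u : ℝ | ¬ u < s ∧ qk κ₂ d ((u - s) / (1 - s)) ∈ B} := by
      refine (measurableSet_lt measurable_id measurable_const).compl.inter ?_
      exact ((measurable_qk.comp (measurable_const.prodMk measurable_id)).comp
        ((measurable_id.sub_const s).div_const (1 - s))) hB
    have hdisj : Disjoint {u : ℝ | u < s ∧ qk κ₁ d (u / s) ∈ B}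
        {u : ℝ | ¬ u < s ∧ qk κ₂ d ((u - s) / (1 - s)) ∈ B} :=
      disjoint_left.2 (fun u hu1 hu2 => hu2.1 hu1.1)
    rw [hpre, measure_union hdisj hm2, branch1 hs0 hs1 d hB, branch2 hs0 hs1 d hB]
  -- Q-side
  have hQX : Q.map X = G := by
    ext B hB
    have hint : ∀ (κ : ProbabilityTheory.Kernel ℝ ℝ) [IsSFiniteKernel κ]
        (ρ : Measure (ℝ × ℝ)) (Y : Ω → ℝ),
        Measurable Y → ν ⊗ₘ κ = ρ → ρ = Q.map (fun ω => (D ω, Y ω)) → Q.map Y = G →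
        ∫⁻ d, κ d B ∂ν = G B := by
      intro κ _ ρ Y hYm hdis hρdef hYQ
      have h1 : (ν ⊗ₘ κ) (univ ×ˢ B) = ∫⁻ d, κ d (Prod.mk d ⁻¹' ((univ : Set ℝ) ×ˢ B)) ∂ν :=
        Measure.compProd_apply (MeasurableSet.univ.prod hB)
      have h2 : ∀ d : ℝ, Prod.mk d ⁻¹' ((univ : Set ℝ) ×ˢ B) = B := by
        intro d; ext y; simp
      simp only [h2] at h1
      rw [← h1, hdis, hρdef,
        Measure.map_apply (hDm.prodMk hYm) (MeasurableSet.univ.prod hB)]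
      have h3 : (fun ω => (D ω, Y ω)) ⁻¹' ((univ : Set ℝ) ×ˢ B) = Y ⁻¹' B := by
        ext ω; simp
      rw [h3, ← Measure.map_apply hYm hB, hYQ]
    have hint1 : ∫⁻ d, κ₁ d B ∂ν = G B := hint κ₁ ρ₁ X₁ hX₁m hd₁ hρ₁ hX₁Q
    have hint2 : ∫⁻ d, κ₂ d B ∂ν = G B := hint κ₂ ρ₂ X₂ hX₂m hd₂ hρ₂ hX₂Q
    rw [Measure.map_apply hXm hB]
    have hXpre : X ⁻¹' B = (fun ω => (D ω, U ω)) ⁻¹' (Ψ ⁻¹' B) := rfl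
    rw [hXpre, ← Measure.map_apply (hDm.prodMk hUm) (hΨm hB), hjoint,
      Measure.prod_apply (hΨm hB)]
    calc ∫⁻ d, (volume.restrict (Ioo (0:ℝ) 1)) (Prod.mk d ⁻¹' (Ψ ⁻¹' B)) ∂ν
        = ∫⁻ d, (ENNReal.ofReal s * κ₁ d B + ENNReal.ofReal (1 - s) * κ₂ d B) ∂ν :=
          lintegral_congr (fun d => hsplit d B hB)
    _ = ENNReal.ofReal s * ∫⁻ d, κ₁ d B ∂ν + ENNReal.ofReal (1 - s) * ∫⁻ d, κ₂ d B ∂ν := by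
          rw [lintegral_add_left (f := fun d => ENNReal.ofReal s * κ₁ d B)
              (measurable_const.mul (κ₁.measurable_coe hB)),
            lintegral_const_mul _ (κ₁.measurable_coe hB),
            lintegral_const_mul _ (κ₂.measurable_coe hB)]
    _ = (ENNReal.ofReal s + ENNReal.ofReal (1 - s)) * G B := by
          rw [hint1, hint2, add_mul]
    _ = G B := by
          rw [← ENNReal.ofReal_add hs0.le (by linarith)]
          norm_num
  -- P-side
  have hP_eq : ∀ (Y : Ω → ℝ), Measurable Y → ∀ B : Set ℝ, MeasurableSet B →
      P (Y ⁻¹' B) = ∫⁻ p : ℝ × ℝ, ENNReal.ofReal p.1 * B.indicator (fun _ => (1:ℝ≥0∞)) p.2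
        ∂(Q.map (fun ω => (D ω, Y ω))) := by
    intro Y hY B hB
    have hfm : Measurable (fun p : ℝ × ℝ =>
        ENNReal.ofReal p.1 * B.indicator (fun _ => (1:ℝ≥0∞)) p.2) :=
      measurable_fst.ennreal_ofReal.mul ((measurable_const.indicator hB).comp measurable_snd)
    rw [lintegral_map hfm (hDm.prodMk hY)]
    have hae : ∀ᵐ ω ∂Q, ENNReal.ofReal (D ω) * B.indicator (fun _ => (1:ℝ≥0∞)) (Y ω) =
        (Y ⁻¹' B).indicator (fun ω => P.rnDeriv Q ω) ω := by
      filter_upwards [P.rnDeriv_ne_top Q] with ω htop'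
      by_cases h : Y ω ∈ B <;>
        simp [Set.indicator_apply, h, hDdef, ENNReal.ofReal_toReal htop']
    rw [lintegral_congr_ae hae, lintegral_indicator (hY hB),
      Measure.setLIntegral_rnDeriv hPQ]
  have hPX : P.map X = t • F₁ + (1 - t) • F₂ := by
    ext B hB
    have hfm : Measurable (fun p : ℝ × ℝ =>
        ENNReal.ofReal p.1 * B.indicator (fun _ => (1:ℝ≥0∞)) p.2) :=
      measurable_fst.ennreal_ofReal.mul ((measurable_const.indicator hB).comp measurable_snd)
    -- weighted kernel integrals give F₁, F₂
    have hwt : ∀ (κ : ProbabilityTheory.Kernel ℝ ℝ) [IsMarkovKernel κ],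
        ∫⁻ p : ℝ × ℝ, ENNReal.ofReal p.1 * B.indicator (fun _ => (1:ℝ≥0∞)) p.2 ∂(ν ⊗ₘ κ) =
        ∫⁻ d, ENNReal.ofReal d * κ d B ∂ν := by
      intro κ _
      rw [Measure.lintegral_compProd hfm]
      refine lintegral_congr fun d => ?_
      dsimp only
      rw [lintegral_const_mul _ (measurable_const.indicator hB)]
      congr 1
      rw [lintegral_indicator_const hB, one_mul]
    have hPκ : ∀ (κ : ProbabilityTheory.Kernel ℝ ℝ) [IsMarkovKernel κ],
        ∀ (ρ : Measure (ℝ × ℝ)) (Y : Ω → ℝ) (F : Measure ℝ), Measurable Y →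
        ν ⊗ₘ κ = ρ → ρ = Q.map (fun ω => (D ω, Y ω)) → P.map Y = F →
        ∫⁻ d, ENNReal.ofReal d * κ d B ∂ν = F B := by
      intro κ _ ρ Y F hYm hdis hρdef hYP
      have h := hP_eq Y hYm B hB
      rw [← hρdef, ← hdis, hwt κ] at h
      rw [← h, ← Measure.map_apply hYm hB, hYP]
    have hPκ₁ : ∫⁻ d, ENNReal.ofReal d * κ₁ d B ∂ν = F₁ B := hPκ κ₁ ρ₁ X₁ F₁ hX₁m hd₁ hρ₁ hX₁P
    have hPκ₂ : ∫⁻ d, ENNReal.ofReal d * κ₂ d B ∂ν = F₂ B := hPκ κ₂ ρ₂ X₂ F₂ hX₂m hd₂ hρ₂ hX₂P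
    rw [Measure.map_apply hXm hB, hP_eq X hXm B hB]
    have hmm : Q.map (fun ω => (D ω, X ω)) =
        (ν.prod (volume.restrict (Ioo (0:ℝ) 1))).map (fun p : ℝ × ℝ => (p.1, Ψ p)) := by
      rw [← hjoint, Measure.map_map (measurable_fst.prodMk hΨm) (hDm.prodMk hUm)]
      rfl
    rw [hmm, lintegral_map hfm (measurable_fst.prodMk hΨm)]
    have hinm : Measurable (fun p : ℝ × ℝ =>
        ENNReal.ofReal p.1 * B.indicator (fun _ => (1:ℝ≥0∞)) (Ψ p)) :=
      measurable_fst.ennreal_ofReal.mul ((measurable_const.indicator hB).comp hΨm)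
    rw [lintegral_prod _ hinm.aemeasurable]
    have hinner : ∀ d : ℝ, ∫⁻ u, ENNReal.ofReal d * B.indicator (fun _ => (1:ℝ≥0∞)) (Ψ (d, u))
          ∂(volume.restrict (Ioo (0:ℝ) 1)) =
        ENNReal.ofReal s * (ENNReal.ofReal d * κ₁ d B) +
          ENNReal.ofReal (1 - s) * (ENNReal.ofReal d * κ₂ d B) := by
      intro d
      have hindm : Measurable (fun u : ℝ => B.indicator (fun _ => (1:ℝ≥0∞)) (Ψ (d, u))) :=
        (measurable_const.indicator hB).comp (hΨm.comp (measurable_const.prodMk measurable_id))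
      rw [lintegral_const_mul _ hindm]
      have hind : ∀ u : ℝ, B.indicator (fun _ => (1:ℝ≥0∞)) (Ψ (d, u)) =
          (Prod.mk d ⁻¹' (Ψ ⁻¹' B)).indicator (fun _ => (1:ℝ≥0∞)) u := by
        intro u
        by_cases h : Ψ (d, u) ∈ B <;> simp [Set.indicator_apply, h]
      rw [lintegral_congr hind, lintegral_indicator_const (measurable_prodMk_left (hΨm hB)),
        one_mul, hsplit d B hB]
      ring
    rw [lintegral_congr hinner]
    have hmeas1 : Measurable (fun d : ℝ => ENNReal.ofReal s * (ENNReal.ofReal d * κ₁ d B)) :=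
      measurable_const.mul (measurable_id.ennreal_ofReal.mul (κ₁.measurable_coe hB))
    have hmeas2 : Measurable (fun d : ℝ => ENNReal.ofReal d * κ₂ d B) :=
      measurable_id.ennreal_ofReal.mul (κ₂.measurable_coe hB)
    have hmeas1' : Measurable (fun d : ℝ => ENNReal.ofReal d * κ₁ d B) :=
      measurable_id.ennreal_ofReal.mul (κ₁.measurable_coe hB)
    rw [lintegral_add_left hmeas1, lintegral_const_mul _ hmeas1',
      lintegral_const_mul _ hmeas2, hPκ₁, hPκ₂]
    have hts : ENNReal.ofReal s = t := ENNReal.ofReal_toReal htop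
    have ht1s : ENNReal.ofReal (1 - s) = 1 - t := by
      rw [ENNReal.ofReal_sub 1 hs0.le, ENNReal.ofReal_one, hts]
    rw [hts, ht1s, Measure.add_apply, Measure.smul_apply, Measure.smul_apply,
      smul_eq_mul, smul_eq_mul]
  exact ⟨X, hXm, hPX, hQX⟩
end

section
/- Let $P$ and $Q$ be equivalent atomless probability measures on $(\Omega,\mathcal A)$, let $G$ be a Borel probability measure on $\mathbb{R}$ with quantile function $G^{-1}$, and let $U$ be a $[0,1]$-uniform (under $Q$) random variable such that $H^{-1}(U)=\frac{dP}{dQ}$ $Q$-a.s., where $H$ is the distribution function of $\frac{dP}{dQ}$ under $Q$. Set $X^*=G^{-1}(U)$ and $X_*=G^{-1}(1-U)$. Then $X^*$ and $X_*$ both have distribution $G$ under $Q$, and for every measurable $Y$ with $Q\circ Y^{-1}=G$ and every $x\in\mathbb{R}$: $P(X_*>x)\le P(Y>x)\le P(X^*>x)$. -/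
open MeasureTheory
open scoped ENNReal

/-- Generalized inverse (quantile function) of a Borel probability measure on `ℝ`. -/
noncomputable def quantileFn (μ : Measure ℝ) (t : ℝ) : ℝ :=
  sInf {x : ℝ | ENNReal.ofReal t ≤ μ (Set.Iic x)}

/-- A measure is atomless: every set of positive measure contains a subset of strictly smaller
positive measure. -/
def AtomlessMeasure {Ω : Type} [MeasurableSpace Ω] (μ : Measure Ω) : Prop :=
  ∀ A : Set Ω, MeasurableSet A → 0 < μ A →
    ∃ B ⊆ A, MeasurableSet B ∧ 0 < μ B ∧ μ B < μ A

section aux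
variable (G : Measure ℝ) [IsProbabilityMeasure G]

lemma quantile_set_nonempty {u : ℝ} (hu : u < 1) :
    {x : ℝ | ENNReal.ofReal u ≤ G (Set.Iic x)}.Nonempty := by
  have h := tendsto_measure_Iic_atTop G
  rw [measure_univ] at h
  have hlt : ENNReal.ofReal u < 1 := by
    by_cases h0 : u ≤ 0
    · simpa [ENNReal.ofReal_eq_zero.2 h0] using one_pos
    · exact ENNReal.ofReal_lt_one.2 hu
  obtain ⟨x, hx⟩ := (h.eventually (lt_mem_nhds hlt)).exists
  exact ⟨x, hx.le⟩

lemma quantile_set_bddBelow {u : ℝ} (hu : 0 < u) :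
    BddBelow {x : ℝ | ENNReal.ofReal u ≤ G (Set.Iic x)} := by
  have hinter : (⋂ n : ℕ, Set.Iic (-(n : ℝ))) = ∅ := by
    ext y
    simp only [Set.mem_iInter, Set.mem_Iic, Set.mem_empty_iff_false, iff_false, not_forall]
    obtain ⟨n, hn⟩ := exists_nat_gt (-y)
    exact ⟨n, by linarith⟩
  have h : Filter.Tendsto (fun n : ℕ => G (Set.Iic (-(n : ℝ)))) Filter.atTop (nhds 0) := by
    have := tendsto_measure_iInter_atTop (μ := G) (s := fun n : ℕ => Set.Iic (-(n : ℝ)))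
      (fun n => (measurableSet_Iic).nullMeasurableSet)
      (fun n m hnm => Set.Iic_subset_Iic.2 (by exact_mod_cast neg_le_neg (Nat.cast_le.2 hnm)))
      ⟨0, measure_ne_top _ _⟩
    simpa [hinter, Function.comp_def] using this
  have hpos : (0 : ℝ≥0∞) < ENNReal.ofReal u := ENNReal.ofReal_pos.2 hu
  obtain ⟨n, hn⟩ := (h.eventually (eventually_lt_nhds hpos)).exists
  refine ⟨-(n : ℝ), fun z hz => ?_⟩
  by_contra hlt
  push_neg at hlt
  exact absurd (le_trans hz (measure_mono (Set.Iic_subset_Iic.2 hlt.le))) (not_le.2 hn)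


lemma quantileFn_le_iff {u x : ℝ} (hu0 : 0 < u) (hu1 : u < 1) :
    quantileFn G u ≤ x ↔ ENNReal.ofReal u ≤ G (Set.Iic x) := by
  constructor
  · intro h
    have hiic : (⋂ n : ℕ, Set.Iic (x + 1 / (n + 1 : ℝ))) = Set.Iic x := by
      ext y
      simp only [Set.mem_iInter, Set.mem_Iic]
      constructor
      · intro hy
        by_contra hxy
        push_neg at hxy
        obtain ⟨n, hn⟩ := exists_nat_one_div_lt (sub_pos.2 hxy)
        exact absurd (hy n) (by push_neg; linarith)
      · intro hy n
        have : (0:ℝ) < 1 / (n + 1 : ℝ) := by positivity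
        linarith
    have htend : Filter.Tendsto (fun n : ℕ => G (Set.Iic (x + 1 / (n + 1 : ℝ)))) Filter.atTop
        (nhds (G (Set.Iic x))) := by
      have := tendsto_measure_iInter_atTop (μ := G)
        (s := fun n : ℕ => Set.Iic (x + 1 / (n + 1 : ℝ)))
        (fun n => measurableSet_Iic.nullMeasurableSet)
        (fun n m hnm => Set.Iic_subset_Iic.2 (by
          have : 1 / (m + 1 : ℝ) ≤ 1 / (n + 1 : ℝ) := by
            apply one_div_le_one_div_of_le (by positivity)
            exact_mod_cast Nat.add_le_add_right hnm 1
          linarith))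
        ⟨0, measure_ne_top _ _⟩
      rw [hiic] at this
      exact this
    refine ge_of_tendsto' htend (fun n => ?_)
    have hlt : quantileFn G u < x + 1 / (n + 1 : ℝ) :=
      lt_of_le_of_lt h (lt_add_of_pos_right x (by positivity))
    obtain ⟨z, hz, hzlt⟩ := exists_lt_of_csInf_lt (quantile_set_nonempty G hu1) hlt
    exact le_trans hz (measure_mono (Set.Iic_subset_Iic.2 hzlt.le))
  · intro h
    exact csInf_le (quantile_set_bddBelow G hu0) h

lemma quantileFn_monotoneOn : MonotoneOn (quantileFn G) (Set.Ioo 0 1) := by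
  intro u hu v hv huv
  exact csInf_le_csInf (quantile_set_bddBelow G hu.1) (quantile_set_nonempty G hv.2)
    (fun z hz => le_trans (ENNReal.ofReal_le_ofReal huv) hz)

/-- Measurable modification of the quantile function. -/
noncomputable def qf (G : Measure ℝ) : ℝ → ℝ :=
  fun t => if t ∈ Set.Ioo (0:ℝ) 1 then quantileFn G t else 0

lemma measurable_qf : Measurable (qf G) := by
  apply measurable_of_Iic
  intro y
  have h1 : MeasurableSet {t | t ∈ Set.Ioo (0:ℝ) 1 ∧ quantileFn G t ≤ y} := by
    apply Set.OrdConnected.measurableSet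
    constructor
    rintro a ⟨ha, hay⟩ b ⟨hb, hby⟩ t ht
    refine ⟨⟨lt_of_lt_of_le ha.1 ht.1, lt_of_le_of_lt ht.2 hb.2⟩, ?_⟩
    have htm : t ∈ Set.Ioo (0:ℝ) 1 := ⟨lt_of_lt_of_le ha.1 ht.1, lt_of_le_of_lt ht.2 hb.2⟩
    exact le_trans (quantileFn_monotoneOn G htm hb ht.2) hby
  have h2 : qf G ⁻¹' Set.Iic y
      = {t | t ∈ Set.Ioo (0:ℝ) 1 ∧ quantileFn G t ≤ y}
        ∪ ((Set.Ioo (0:ℝ) 1)ᶜ ∩ {t : ℝ | (0:ℝ) ≤ y}) := by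
    ext t
    constructor
    · intro hmem
      by_cases ht : t ∈ Set.Ioo (0:ℝ) 1
      · exact Or.inl ⟨ht, by simpa [qf, ht] using hmem⟩
      · exact Or.inr ⟨ht, by simpa [qf, ht] using hmem⟩
    · intro hmem
      rcases hmem with ⟨ht, hle⟩ | ⟨ht, hy⟩
      · simpa [qf, ht] using hle
      · rw [Set.mem_compl_iff] at ht
        simpa [qf, ht] using hy
  rw [h2]
  refine h1.union (measurableSet_Ioo.compl.inter ?_)
  by_cases hy : (0:ℝ) ≤ y <;> simp [hy]

/-- Law of the quantile transform of a (0,1)-a.e. valued uniform variable. -/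
lemma map_quantile_eq {Ω : Type} [MeasurableSpace Ω] (Q : Measure Ω) [IsProbabilityMeasure Q]
    (V : Ω → ℝ) (hV : Measurable V) (hae : ∀ᵐ ω ∂Q, V ω ∈ Set.Ioo (0:ℝ) 1)
    (hlaw : ∀ a : ℝ, 0 ≤ a → a ≤ 1 → Q (V ⁻¹' Set.Iic a) = ENNReal.ofReal a) :
    Q.map (fun ω => quantileFn G (V ω)) = G := by
  have hmeas : Measurable (fun ω => qf G (V ω)) := (measurable_qf G).comp hV
  have heq : (fun ω => quantileFn G (V ω)) =ᵐ[Q] fun ω => qf G (V ω) := by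
    filter_upwards [hae] with ω hω
    simp [qf, hω]
  rw [Measure.map_congr heq]
  haveI : IsProbabilityMeasure (Q.map (fun ω => qf G (V ω))) :=
    Measure.isProbabilityMeasure_map hmeas.aemeasurable
  refine Measure.ext_of_Iic _ _ (fun y => ?_)
  rw [Measure.map_apply hmeas measurableSet_Iic]
  set c := (G (Set.Iic y)).toReal with hc
  have hc0 : 0 ≤ c := ENNReal.toReal_nonneg
  have hc1 : c ≤ 1 := by
    have := ENNReal.toReal_mono (measure_ne_top G Set.univ)
      (measure_mono (Set.subset_univ (Set.Iic y)))
    simpa [measure_univ] using this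
  have hce : ENNReal.ofReal c = G (Set.Iic y) := ENNReal.ofReal_toReal (measure_ne_top _ _)
  have hsets : ((fun ω => qf G (V ω)) ⁻¹' Set.Iic y : Set Ω) =ᵐ[Q] V ⁻¹' Set.Iic c := by
    rw [Filter.eventuallyEq_set]
    filter_upwards [hae] with ω hω
    simp only [Set.mem_preimage, Set.mem_Iic]
    rw [show qf G (V ω) = quantileFn G (V ω) by simp [qf, hω]]
    rw [quantileFn_le_iff G hω.1 hω.2, ← hce, ENNReal.ofReal_le_ofReal_iff hc0]
  rw [measure_congr hsets, hlaw c hc0 hc1, hce]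

end aux

/-- The exchange (Hardy–Littlewood) inequality. -/
lemma lintegral_exchange {Ω : Type} [MeasurableSpace Ω] {Q : Measure Ω} [IsFiniteMeasure Q]
    {Z : Ω → ℝ≥0∞} {S T : Set Ω} (hS : MeasurableSet S) (hT : MeasurableSet T)
    (hST : Q S = Q T) {M : ℝ≥0∞}
    (h1 : ∀ᵐ ω ∂Q, ω ∈ S \ T → Z ω ≤ M)
    (h2 : ∀ᵐ ω ∂Q, ω ∈ T \ S → M ≤ Z ω) :
    ∫⁻ ω in S, Z ω ∂Q ≤ ∫⁻ ω in T, Z ω ∂Q := by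
  have hd : Q (S \ T) = Q (T \ S) := by
    have a := measure_inter_add_diff (μ := Q) S hT
    have b := measure_inter_add_diff (μ := Q) T hS
    rw [Set.inter_comm] at b
    have hab : Q (S ∩ T) + Q (S \ T) = Q (S ∩ T) + Q (T \ S) := by
      rw [a, b, hST]
    exact (ENNReal.add_right_inj (measure_ne_top _ _)).1 hab
  have e1 : ∫⁻ ω in S \ T, Z ω ∂Q ≤ M * Q (S \ T) := by
    rw [← setLIntegral_const]
    exact lintegral_mono_ae ((ae_restrict_iff' (hS.diff hT)).2 h1)
  have e2 : M * Q (T \ S) ≤ ∫⁻ ω in T \ S, Z ω ∂Q := by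
    rw [← setLIntegral_const]
    exact lintegral_mono_ae ((ae_restrict_iff' (hT.diff hS)).2 h2)
  calc ∫⁻ ω in S, Z ω ∂Q = ∫⁻ ω in S ∩ T, Z ω ∂Q + ∫⁻ ω in S \ T, Z ω ∂Q :=
        (lintegral_inter_add_diff _ _ hT).symm
    _ ≤ ∫⁻ ω in S ∩ T, Z ω ∂Q + ∫⁻ ω in T \ S, Z ω ∂Q := by
        refine add_le_add le_rfl (e1.trans ?_)
        rw [hd]; exact e2
    _ = ∫⁻ ω in T ∩ S, Z ω ∂Q + ∫⁻ ω in T \ S, Z ω ∂Q := by rw [Set.inter_comm]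
    _ = ∫⁻ ω in T, Z ω ∂Q := lintegral_inter_add_diff _ _ hS


/-- Proposition 5.4. Let `P, Q` be equivalent atomless probability measures,
`G` a Borel probability measure on `ℝ`, and `U` a `[0,1]`-uniform random variable under `Q`
with `H⁻¹(U) = dP/dQ` `Q`-a.s., where `H` is the distribution of `dP/dQ` under `Q`. Then
`X* = G⁻¹(U)` and `X₊ = G⁻¹(1-U)` both have distribution `G` under `Q`, and for every `Y`
with distribution `G` under `Q` and all `x`, `P(X₊ > x) ≤ P(Y > x) ≤ P(X* > x)`. -/
theorem stochastic_order_bounds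
    {Ω : Type} [MeasurableSpace Ω]
    (P Q : Measure Ω) [IsProbabilityMeasure P] [IsProbabilityMeasure Q]
    (hPQ : P ≪ Q) (hQP : Q ≪ P)
    (hPat : AtomlessMeasure P) (hQat : AtomlessMeasure Q)
    (G : Measure ℝ) [IsProbabilityMeasure G]
    (U : Ω → ℝ) (hU : Measurable U)
    (hUlaw : Q.map U = volume.restrict (Set.Icc (0:ℝ) 1))
    (hUq : ∀ᵐ ω ∂Q,
      quantileFn (Q.map (fun ω' => (P.rnDeriv Q ω').toReal)) (U ω)
        = (P.rnDeriv Q ω).toReal) :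
    Q.map (fun ω => quantileFn G (U ω)) = G ∧
    Q.map (fun ω => quantileFn G (1 - U ω)) = G ∧
    ∀ Y : Ω → ℝ, Measurable Y → Q.map Y = G → ∀ x : ℝ,
      P {ω | x < quantileFn G (1 - U ω)} ≤ P {ω | x < Y ω} ∧
      P {ω | x < Y ω} ≤ P {ω | x < quantileFn G (U ω)} := by
  have hU01 : ∀ᵐ ω ∂Q, U ω ∈ Set.Ioo (0:ℝ) 1 := by
    rw [ae_iff]
    have hpre : {ω | ¬ U ω ∈ Set.Ioo (0:ℝ) 1} = U ⁻¹' (Set.Ioo (0:ℝ) 1)ᶜ := rfl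
    rw [hpre, ← Measure.map_apply hU measurableSet_Ioo.compl, hUlaw,
      Measure.restrict_apply measurableSet_Ioo.compl]
    have hset : (Set.Ioo (0:ℝ) 1)ᶜ ∩ Set.Icc 0 1 = ({0, 1} : Set ℝ) := by
      ext t
      simp only [Set.mem_inter_iff, Set.mem_compl_iff, Set.mem_Ioo, Set.mem_Icc,
        Set.mem_insert_iff, Set.mem_singleton_iff]
      constructor
      · rintro ⟨h1, h2, h3⟩
        push_neg at h1
        rcases eq_or_lt_of_le h2 with h | h
        · exact Or.inl h.symm
        · exact Or.inr (le_antisymm h3 (h1 h))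
      · rintro (rfl | rfl) <;> norm_num
    rw [hset]
    exact Set.Countable.measure_zero ((Set.countable_singleton (1:ℝ)).insert 0) _
  have hlawU : ∀ a : ℝ, 0 ≤ a → a ≤ 1 → Q (U ⁻¹' Set.Iic a) = ENNReal.ofReal a := by
    intro a ha0 ha1
    rw [← Measure.map_apply hU measurableSet_Iic, hUlaw,
      Measure.restrict_apply measurableSet_Iic]
    have hs : Set.Iic a ∩ Set.Icc 0 1 = Set.Icc 0 a := by
      ext t
      simp only [Set.mem_inter_iff, Set.mem_Iic, Set.mem_Icc]
      exact ⟨fun h => ⟨h.2.1, h.1⟩, fun h => ⟨h.2, h.1, h.2.trans ha1⟩⟩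
    rw [hs, Real.volume_Icc, sub_zero]
  have hVmeas : Measurable (fun ω => 1 - U ω) := measurable_const.sub hU
  have hV01 : ∀ᵐ ω ∂Q, (1 - U ω) ∈ Set.Ioo (0:ℝ) 1 :=
    hU01.mono (fun ω h => ⟨by linarith [h.2], by linarith [h.1]⟩)
  have hlawV : ∀ a : ℝ, 0 ≤ a → a ≤ 1 →
      Q ((fun ω => 1 - U ω) ⁻¹' Set.Iic a) = ENNReal.ofReal a := by
    intro a ha0 ha1
    have hpre : (fun ω => 1 - U ω) ⁻¹' Set.Iic a = U ⁻¹' Set.Ici (1 - a) := by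
      ext ω
      simp only [Set.mem_preimage, Set.mem_Iic, Set.mem_Ici]
      constructor <;> intro h <;> linarith
    rw [hpre, ← Measure.map_apply hU measurableSet_Ici, hUlaw,
      Measure.restrict_apply measurableSet_Ici]
    have hs : Set.Ici (1 - a) ∩ Set.Icc 0 1 = Set.Icc (1 - a) 1 := by
      ext t
      simp only [Set.mem_inter_iff, Set.mem_Ici, Set.mem_Icc]
      exact ⟨fun h => ⟨h.1, h.2.2⟩, fun h => ⟨h.1, by linarith [h.1], h.2⟩⟩
    rw [hs, Real.volume_Icc]
    congr 1
    ring
  refine ⟨map_quantile_eq G Q U hU hU01 hlawU, map_quantile_eq G Q _ hVmeas hV01 hlawV, ?_⟩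
  intro Y hY hYlaw x
  have hZmeas : Measurable (fun ω => (P.rnDeriv Q ω).toReal) :=
    (Measure.measurable_rnDeriv P Q).ennreal_toReal
  set H : Measure ℝ := Q.map (fun ω' => (P.rnDeriv Q ω').toReal) with hH
  haveI : IsProbabilityMeasure H := Measure.isProbabilityMeasure_map hZmeas.aemeasurable
  set c : ℝ := (G (Set.Iic x)).toReal with hcdef
  have hc0 : 0 ≤ c := ENNReal.toReal_nonneg
  have hc1 : c ≤ 1 := by
    have := ENNReal.toReal_mono (measure_ne_top G Set.univ)
      (measure_mono (Set.subset_univ (Set.Iic x)))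
    simpa [measure_univ] using this
  have hce : ENNReal.ofReal c = G (Set.Iic x) := ENNReal.ofReal_toReal (measure_ne_top _ _)
  have hAmeas : MeasurableSet {ω | x < Y ω} := measurableSet_lt measurable_const hY
  have hQA : Q {ω | x < Y ω} = ENNReal.ofReal (1 - c) := by
    have hApre : {ω | x < Y ω} = Y ⁻¹' Set.Ioi x := rfl
    rw [hApre, ← Measure.map_apply hY measurableSet_Ioi, hYlaw, ← Set.compl_Iic,
      measure_compl measurableSet_Iic (measure_ne_top _ _), measure_univ, ← hce,
      ENNReal.ofReal_sub 1 hc0, ENNReal.ofReal_one]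
  have hBmeas : MeasurableSet (U ⁻¹' Set.Ioi c) := hU measurableSet_Ioi
  have hQB : Q (U ⁻¹' Set.Ioi c) = ENNReal.ofReal (1 - c) := by
    rw [← Measure.map_apply hU measurableSet_Ioi, hUlaw,
      Measure.restrict_apply measurableSet_Ioi]
    have hs : Set.Ioi c ∩ Set.Icc 0 1 = Set.Ioc c 1 := by
      ext t
      simp only [Set.mem_inter_iff, Set.mem_Ioi, Set.mem_Icc, Set.mem_Ioc]
      exact ⟨fun h => ⟨h.1, h.2.2⟩, fun h => ⟨h.1, le_trans hc0 h.1.le, h.2⟩⟩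
    rw [hs, Real.volume_Ioc]
  have hBmmeas : MeasurableSet (U ⁻¹' Set.Iio (1 - c)) := hU measurableSet_Iio
  have hQBm : Q (U ⁻¹' Set.Iio (1 - c)) = ENNReal.ofReal (1 - c) := by
    rw [← Measure.map_apply hU measurableSet_Iio, hUlaw,
      Measure.restrict_apply measurableSet_Iio]
    have hs : Set.Iio (1 - c) ∩ Set.Icc 0 1 = Set.Ico 0 (1 - c) := by
      ext t
      simp only [Set.mem_inter_iff, Set.mem_Iio, Set.mem_Icc, Set.mem_Ico]
      exact ⟨fun h => ⟨h.2.1, h.1⟩, fun h => ⟨h.2, h.1, by linarith [h.2]⟩⟩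
    rw [hs, Real.volume_Ico, sub_zero]
  have hupper : {ω | x < quantileFn G (U ω)} =ᵐ[Q] U ⁻¹' Set.Ioi c := by
    rw [Filter.eventuallyEq_set]
    filter_upwards [hU01] with ω hω
    simp only [Set.mem_setOf_eq, Set.mem_preimage, Set.mem_Ioi]
    rw [← not_le, ← not_le]
    exact not_congr (by
      rw [quantileFn_le_iff G hω.1 hω.2, ← hce, ENNReal.ofReal_le_ofReal_iff hc0])
  have hlower : {ω | x < quantileFn G (1 - U ω)} =ᵐ[Q] U ⁻¹' Set.Iio (1 - c) := by
    rw [Filter.eventuallyEq_set]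
    filter_upwards [hU01] with ω hω
    have hω' : (1 - U ω) ∈ Set.Ioo (0:ℝ) 1 := ⟨by linarith [hω.2], by linarith [hω.1]⟩
    simp only [Set.mem_setOf_eq, Set.mem_preimage, Set.mem_Iio]
    have hiff : x < quantileFn G (1 - U ω) ↔ c < 1 - U ω := by
      rw [← not_le, ← not_le]
      exact not_congr (by
        rw [quantileFn_le_iff G hω'.1 hω'.2, ← hce, ENNReal.ofReal_le_ofReal_iff hc0])
    rw [hiff]
    constructor <;> intro h <;> linarith
  have hPup : P {ω | x < quantileFn G (U ω)} = P (U ⁻¹' Set.Ioi c) :=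
    measure_congr (hupper.filter_mono hPQ.ae_le)
  have hPlow : P {ω | x < quantileFn G (1 - U ω)} = P (U ⁻¹' Set.Iio (1 - c)) :=
    measure_congr (hlower.filter_mono hPQ.ae_le)
  rw [hPup, hPlow]
  by_cases hc0' : c = 0
  · have hAuniv : {ω | x < Y ω} =ᵐ[Q] (Set.univ : Set Ω) := by
      rw [ae_eq_univ]
      have hcompl : {ω | x < Y ω}ᶜ = Y ⁻¹' Set.Iic x := by
        ext ω
        simp [not_lt]
      rw [hcompl, ← Measure.map_apply hY measurableSet_Iic, hYlaw, ← hce, hc0',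
        ENNReal.ofReal_zero]
    have hBuniv : (U ⁻¹' Set.Ioi c) =ᵐ[Q] (Set.univ : Set Ω) := by
      rw [Filter.eventuallyEq_univ]
      filter_upwards [hU01] with ω hω
      simp only [Set.mem_preimage, Set.mem_Ioi, hc0']
      exact hω.1
    have hBmuniv : (U ⁻¹' Set.Iio (1 - c)) =ᵐ[Q] (Set.univ : Set Ω) := by
      rw [Filter.eventuallyEq_univ]
      filter_upwards [hU01] with ω hω
      simp only [Set.mem_preimage, Set.mem_Iio, hc0']
      linarith [hω.2]
    constructor
    · rw [measure_congr (hBmuniv.filter_mono hPQ.ae_le),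
        measure_congr (hAuniv.filter_mono hPQ.ae_le)]
    · rw [measure_congr (hAuniv.filter_mono hPQ.ae_le),
        measure_congr (hBuniv.filter_mono hPQ.ae_le)]
  by_cases hc1' : c = 1
  · have h0 : ENNReal.ofReal (1 - c) = 0 := by
      rw [hc1']
      simp
    have hPA0 : P {ω | x < Y ω} = 0 := hPQ (by rw [hQA, h0])
    have hPB0 : P (U ⁻¹' Set.Ioi c) = 0 := hPQ (by rw [hQB, h0])
    have hPBm0 : P (U ⁻¹' Set.Iio (1 - c)) = 0 := hPQ (by rw [hQBm, h0])
    rw [hPA0, hPB0, hPBm0]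
    exact ⟨le_rfl, le_rfl⟩
  have hcc : c ∈ Set.Ioo (0:ℝ) 1 := ⟨lt_of_le_of_ne hc0 (Ne.symm hc0'), lt_of_le_of_ne hc1 hc1'⟩
  have hcc' : (1 - c) ∈ Set.Ioo (0:ℝ) 1 := ⟨by linarith [hcc.2], by linarith [hcc.1]⟩
  have hfin := Measure.rnDeriv_lt_top P Q
  have hPA : P {ω | x < Y ω} = ∫⁻ ω in {ω | x < Y ω}, P.rnDeriv Q ω ∂Q :=
    (Measure.setLIntegral_rnDeriv hPQ _).symm
  have hPB : P (U ⁻¹' Set.Ioi c) = ∫⁻ ω in U ⁻¹' Set.Ioi c, P.rnDeriv Q ω ∂Q :=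
    (Measure.setLIntegral_rnDeriv hPQ _).symm
  have hPBm : P (U ⁻¹' Set.Iio (1 - c)) = ∫⁻ ω in U ⁻¹' Set.Iio (1 - c), P.rnDeriv Q ω ∂Q :=
    (Measure.setLIntegral_rnDeriv hPQ _).symm
  constructor
  · rw [hPBm, hPA]
    refine lintegral_exchange hBmmeas hAmeas (hQBm.trans hQA.symm)
      (M := ENNReal.ofReal (quantileFn H (1 - c))) ?_ ?_
    · filter_upwards [hUq, hfin, hU01] with ω h1 h2 h3 hmem
      have hle : (P.rnDeriv Q ω).toReal ≤ quantileFn H (1 - c) := by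
        rw [← h1]
        exact quantileFn_monotoneOn H h3 hcc' (le_of_lt hmem.1)
      calc P.rnDeriv Q ω = ENNReal.ofReal (P.rnDeriv Q ω).toReal :=
            (ENNReal.ofReal_toReal h2.ne).symm
        _ ≤ ENNReal.ofReal (quantileFn H (1 - c)) := ENNReal.ofReal_le_ofReal hle
    · filter_upwards [hUq, hfin, hU01] with ω h1 h2 h3 hmem
      have h4 : 1 - c ≤ U ω := not_lt.1 hmem.2
      have hge : quantileFn H (1 - c) ≤ (P.rnDeriv Q ω).toReal := by
        rw [← h1]
        exact quantileFn_monotoneOn H hcc' h3 h4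
      calc ENNReal.ofReal (quantileFn H (1 - c))
          ≤ ENNReal.ofReal (P.rnDeriv Q ω).toReal := ENNReal.ofReal_le_ofReal hge
        _ = P.rnDeriv Q ω := ENNReal.ofReal_toReal h2.ne
  · rw [hPB, hPA]
    refine lintegral_exchange hAmeas hBmeas (hQA.trans hQB.symm)
      (M := ENNReal.ofReal (quantileFn H c)) ?_ ?_
    · filter_upwards [hUq, hfin, hU01] with ω h1 h2 h3 hmem
      have h4 : U ω ≤ c := not_lt.1 hmem.2
      have hle : (P.rnDeriv Q ω).toReal ≤ quantileFn H c := by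
        rw [← h1]
        exact quantileFn_monotoneOn H h3 hcc h4
      calc P.rnDeriv Q ω = ENNReal.ofReal (P.rnDeriv Q ω).toReal :=
            (ENNReal.ofReal_toReal h2.ne).symm
        _ ≤ ENNReal.ofReal (quantileFn H c) := ENNReal.ofReal_le_ofReal hle
    · filter_upwards [hUq, hfin, hU01] with ω h1 h2 h3 hmem
      have hge : quantileFn H c ≤ (P.rnDeriv Q ω).toReal := by
        rw [← h1]
        exact quantileFn_monotoneOn H hcc h3 (le_of_lt hmem.1)
      calc ENNReal.ofReal (quantileFn H c)
          ≤ ENNReal.ofReal (P.rnDeriv Q ω).toReal := ENNReal.ofReal_le_ofReal hge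
        _ = P.rnDeriv Q ω := ENNReal.ofReal_toReal h2.ne
end

section
/- Let $P$ and $Q$ be equivalent atomless probability measures on $(\Omega,\mathcal A)$, let $q\in(0,1)$, let $H$ be the distribution function of $\frac{dP}{dQ}$ under $Q$, and let $U$ be a $[0,1]$-uniform random variable under $Q$ with $H^{-1}(U)=\frac{dP}{dQ}$ $Q$-a.s. Then $\max\{P(A): A\in\mathcal A,\ Q(A)=q\} = \int_{1-q}^1 H^{-1}(u)\,du$, and the maximum is attained by $A^*=\{U\ge 1-q\}$. -/
open MeasureTheory
open scoped ENNReal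

lemma quantile_mem_nonneg (μ : Measure ℝ) (hμ0 : μ (Set.Iio 0) = 0)
    {s x : ℝ} (hs : 0 < s) (hx : ENNReal.ofReal s ≤ μ (Set.Iic x)) : 0 ≤ x := by
  by_contra h
  push_neg at h
  have h2 : μ (Set.Iic x) ≤ μ (Set.Iio 0) := measure_mono (Set.Iic_subset_Iio.mpr h)
  rw [hμ0, le_zero_iff] at h2
  rw [h2, le_zero_iff, ENNReal.ofReal_eq_zero] at hx
  linarith

lemma quantile_set_nonempty_s16 (μ : Measure ℝ) [IsProbabilityMeasure μ] {t : ℝ} (ht : t < 1) :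
    {x : ℝ | ENNReal.ofReal t ≤ μ (Set.Iic x)}.Nonempty := by
  have h1 : ENNReal.ofReal t < μ Set.univ := by
    rw [measure_univ]; exact ENNReal.ofReal_lt_one.mpr ht
  obtain ⟨x, hx⟩ := ((tendsto_measure_Iic_atTop μ).eventually (eventually_gt_nhds h1)).exists
  exact ⟨x, hx.le⟩

lemma quantile_nonneg (μ : Measure ℝ) [IsProbabilityMeasure μ] (hμ0 : μ (Set.Iio 0) = 0)
    {s : ℝ} (hs : 0 < s) (hs1 : s < 1) : 0 ≤ quantileFn μ s :=
  le_csInf (quantile_set_nonempty_s16 μ hs1) fun _ hx => quantile_mem_nonneg μ hμ0 hs hx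

lemma quantile_mono (μ : Measure ℝ) [IsProbabilityMeasure μ] (hμ0 : μ (Set.Iio 0) = 0)
    {s t : ℝ} (hs : 0 < s) (hst : s ≤ t) (ht : t < 1) : quantileFn μ s ≤ quantileFn μ t := by
  refine csInf_le_csInf ⟨0, fun x hx => quantile_mem_nonneg μ hμ0 hs hx⟩
    (quantile_set_nonempty_s16 μ ht) ?_
  intro x hx
  exact le_trans (ENNReal.ofReal_le_ofReal hst) hx

/-- Example 5.6, Neyman–Pearson. Let `P, Q` be equivalent atomless
probability measures, `q ∈ (0,1)`, `H` the distribution of `dP/dQ` under `Q`, and `U` a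
`[0,1]`-uniform random variable under `Q` with `H⁻¹(U) = dP/dQ` `Q`-a.s. Then the maximum of
`P(A)` over measurable `A` with `Q(A) = q` equals `∫_{1-q}^1 H⁻¹(u) du` and is attained at
`A* = {U ≥ 1-q}`. -/
theorem neyman_pearson
    {Ω : Type} [MeasurableSpace Ω]
    (P Q : Measure Ω) [IsProbabilityMeasure P] [IsProbabilityMeasure Q]
    (hPQ : P ≪ Q) (hQP : Q ≪ P)
    (hPat : AtomlessMeasure P) (hQat : AtomlessMeasure Q)
    (q : ℝ) (hq : q ∈ Set.Ioo (0:ℝ) 1)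
    (U : Ω → ℝ) (hU : Measurable U)
    (hUlaw : Q.map U = volume.restrict (Set.Icc (0:ℝ) 1))
    (hUq : ∀ᵐ ω ∂Q,
      quantileFn (Q.map (fun ω' => (P.rnDeriv Q ω').toReal)) (U ω)
        = (P.rnDeriv Q ω).toReal) :
    Q {ω | 1 - q ≤ U ω} = ENNReal.ofReal q ∧
    (P {ω | 1 - q ≤ U ω}).toReal
      = ∫ u in Set.Ioc (1 - q) 1,
          quantileFn (Q.map (fun ω' => (P.rnDeriv Q ω').toReal)) u ∧
    ∀ A : Set Ω, MeasurableSet A → Q A = ENNReal.ofReal q →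
      P A ≤ P {ω | 1 - q ≤ U ω} := by
  obtain ⟨hq0, hq1⟩ := hq
  set f : Ω → ℝ := fun ω => (P.rnDeriv Q ω).toReal with hfdef
  have hfmeas : Measurable f := (Measure.measurable_rnDeriv P Q).ennreal_toReal
  set μ := Q.map f with hμdef
  haveI : IsProbabilityMeasure μ := Measure.isProbabilityMeasure_map hfmeas.aemeasurable
  have hμ0 : μ (Set.Iio 0) = 0 := by
    rw [hμdef, Measure.map_apply hfmeas measurableSet_Iio]
    have : f ⁻¹' Set.Iio 0 = ∅ := by
      ext ω; simp [Set.mem_preimage, hfdef, not_lt, ENNReal.toReal_nonneg]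
    rw [this, measure_empty]
  set g := quantileFn μ with hgdef
  set B : Set Ω := {ω | 1 - q ≤ U ω} with hBdef
  have hBpre : B = U ⁻¹' Set.Ici (1 - q) := rfl
  have hBmeas : MeasurableSet B := hU measurableSet_Ici
  have hInter : Set.Ici (1 - q) ∩ Set.Icc 0 1 = Set.Icc (1 - q) 1 := by
    ext x
    simp only [Set.mem_inter_iff, Set.mem_Ici, Set.mem_Icc]
    constructor
    · rintro ⟨h1, h2, h3⟩; exact ⟨h1, h3⟩
    · rintro ⟨h1, h2⟩; exact ⟨h1, by linarith, h2⟩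
  -- Goal 1
  have hQB : Q B = ENNReal.ofReal q := by
    rw [hBpre, ← Measure.map_apply hU measurableSet_Ici, hUlaw,
      Measure.restrict_apply measurableSet_Ici, hInter, Real.volume_Icc]
    congr 1
    ring
  -- monotonicity facts
  have hmono : ∀ ⦃s t : ℝ⦄, 0 < s → s ≤ t → t < 1 → g s ≤ g t :=
    fun s t hs hst ht => quantile_mono μ hμ0 hs hst ht
  have hc0 : 0 ≤ g (1 - q) := quantile_nonneg μ hμ0 (by linarith) (by linarith)
  -- U is a.e. in (0,1)
  have hU01 : ∀ᵐ ω ∂Q, U ω ∈ Set.Ioo (0:ℝ) 1 := by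
    have hnull : ∀ (s : Set ℝ), MeasurableSet s → s ∩ Set.Icc 0 1 ⊆ ({0, 1} : Set ℝ) →
        Q (U ⁻¹' s) = 0 := by
      intro s hs hsub
      rw [← Measure.map_apply hU hs, hUlaw, Measure.restrict_apply hs]
      refine measure_mono_null hsub ?_
      refine le_antisymm ?_ zero_le
      calc volume ({0, 1} : Set ℝ) ≤ volume ({0} : Set ℝ) + volume ({1} : Set ℝ) :=
            measure_union_le _ _
        _ = 0 := by simp
    have h1 : Q (U ⁻¹' Set.Iic 0) = 0 := by
      refine hnull _ measurableSet_Iic ?_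
      rintro x ⟨hx1, hx2, hx3⟩
      left; exact le_antisymm hx1 hx2
    have h2 : Q (U ⁻¹' Set.Ici 1) = 0 := by
      refine hnull _ measurableSet_Ici ?_
      rintro x ⟨hx1, hx2, hx3⟩
      right; exact le_antisymm hx3 hx1
    have : Q (U ⁻¹' Set.Iic 0 ∪ U ⁻¹' Set.Ici 1) = 0 := measure_union_null h1 h2
    refine measure_mono_null ?_ this
    intro ω hω
    simp only [Set.mem_compl_iff, Set.mem_setOf_eq, Set.mem_Ioo] at hω
    push_neg at hω
    simp only [Set.mem_union, Set.mem_preimage, Set.mem_Iic, Set.mem_Ici]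
    rcases le_or_gt (U ω) 0 with h | h
    · exact Or.inl h
    · exact Or.inr (hω h)
  -- Goal 2
  have hPt : ∀ s : Set Ω, (P s).toReal = ∫ ω in s, f ω ∂Q :=
    fun s => (Measure.setIntegral_toReal_rnDeriv hPQ s).symm
  have hmOn : MonotoneOn g (Set.Ioo 0 1) := fun a ha b hb hab => hmono ha.1 hab hb.2
  have hgae : AEMeasurable g (volume.restrict (Set.Icc (0:ℝ) 1)) := by
    have h := aemeasurable_restrict_of_monotoneOn (μ := volume) measurableSet_Ioo hmOn
    rwa [Measure.restrict_congr_set Ioo_ae_eq_Icc] at h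
  have hgsm : AEStronglyMeasurable g (Q.map U) := by
    rw [hUlaw]; exact hgae.aestronglyMeasurable
  have hchg : ∫ u in Set.Ici (1 - q), g u ∂(Q.map U)
      = ∫ ω in U ⁻¹' Set.Ici (1 - q), g (U ω) ∂Q :=
    setIntegral_map measurableSet_Ici hgsm hU.aemeasurable
  have hl : ∫ u in Set.Ici (1 - q), g u ∂(Q.map U) = ∫ u in Set.Ioc (1 - q) 1, g u := by
    rw [hUlaw, Measure.restrict_restrict measurableSet_Ici, hInter]
    exact (setIntegral_congr_set Ioc_ae_eq_Icc).symm
  have hr : ∫ ω in U ⁻¹' Set.Ici (1 - q), g (U ω) ∂Q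
      = ∫ ω in U ⁻¹' Set.Ici (1 - q), f ω ∂Q := by
    refine setIntegral_congr_ae (hU measurableSet_Ici) ?_
    filter_upwards [hUq] with ω h _
    exact h
  have hgoal2 : (P B).toReal = ∫ u in Set.Ioc (1 - q) 1, g u := by
    rw [hPt B, hBpre, ← hr, ← hchg, hl]
  refine ⟨hQB, hgoal2, ?_⟩
  -- Goal 3
  intro A hAmeas hQA
  have hfi : Integrable f Q := Measure.integrable_toReal_rnDeriv
  have hcmp : ∀ᵐ ω ∂Q, (U ω < 1 - q → f ω ≤ g (1 - q)) ∧ (1 - q ≤ U ω → g (1 - q) ≤ f ω) := by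
    filter_upwards [hU01, hUq] with ω h01 heq
    constructor
    · intro h
      have h2 := hmono h01.1 h.le (by linarith)
      rw [heq] at h2
      exact h2
    · intro h
      have h2 := hmono (by linarith) h h01.2
      rw [heq] at h2
      exact h2
  have hQAB : Q (A \ B) = Q (B \ A) := by
    have h1 : Q (A ∩ B) + Q (A \ B) = Q A := measure_inter_add_diff A hBmeas
    have h2 : Q (B ∩ A) + Q (B \ A) = Q B := measure_inter_add_diff B hAmeas
    rw [Set.inter_comm] at h2
    have h3 : Q (A ∩ B) + Q (A \ B) = Q (A ∩ B) + Q (B \ A) := by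
      rw [h1, h2, hQA, hQB]
    exact (ENNReal.add_right_inj (measure_ne_top _ _)).mp h3
  have hub : ∫ ω in A \ B, f ω ∂Q ≤ g (1 - q) * (Q (A \ B)).toReal := by
    have hABm : MeasurableSet (A \ B) := hAmeas.diff hBmeas
    have h : ∫ ω in A \ B, f ω ∂Q ≤ ∫ _ in A \ B, g (1 - q) ∂Q := by
      refine setIntegral_mono_ae_restrict hfi.integrableOn
        (integrableOn_const (measure_ne_top _ _)) ?_
      filter_upwards [ae_restrict_of_ae hcmp, ae_restrict_mem hABm] with ω hω hmem
      exact hω.1 (not_le.mp hmem.2)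
    rwa [setIntegral_const, smul_eq_mul, mul_comm] at h
  have hlb : g (1 - q) * (Q (B \ A)).toReal ≤ ∫ ω in B \ A, f ω ∂Q := by
    have hBAm : MeasurableSet (B \ A) := hBmeas.diff hAmeas
    have h : ∫ _ in B \ A, g (1 - q) ∂Q ≤ ∫ ω in B \ A, f ω ∂Q := by
      refine setIntegral_mono_ae_restrict
        (integrableOn_const (measure_ne_top _ _)) hfi.integrableOn ?_
      filter_upwards [ae_restrict_of_ae hcmp, ae_restrict_mem hBAm] with ω hω hmem
      exact hω.2 hmem.1
    rwa [setIntegral_const, smul_eq_mul, mul_comm] at h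
  have key : P (A \ B) ≤ P (B \ A) := by
    rw [← ENNReal.toReal_le_toReal (measure_ne_top _ _) (measure_ne_top _ _)]
    calc (P (A \ B)).toReal = ∫ ω in A \ B, f ω ∂Q := hPt _
      _ ≤ g (1 - q) * (Q (A \ B)).toReal := hub
      _ = g (1 - q) * (Q (B \ A)).toReal := by rw [hQAB]
      _ ≤ ∫ ω in B \ A, f ω ∂Q := hlb
      _ = (P (B \ A)).toReal := (hPt _).symm
  calc P A = P (A ∩ B) + P (A \ B) := (measure_inter_add_diff A hBmeas).symm
    _ ≤ P (A ∩ B) + P (B \ A) := add_le_add_right key _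
    _ = P (B ∩ A) + P (B \ A) := by rw [Set.inter_comm]
    _ = P B := measure_inter_add_diff B hAmeas
end
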